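/- arXiv:2509.22171 — 6 statements merged into one kernel-verified Lean document; each statement's English description precedes it below -/
import Mathlib

section
/- Let (θ, J, Adm) be a variational problem on π : E = ℝ × N → ℝ, and assume Adm is B(π)-linear, i.e. g·ξ ∈ Adm for every π-basic function g ∈ B(π) and every ξ ∈ Adm. Then a section γ of π over an open interval I is a solution of the variational problem (θ, J, Adm) if and only if: (1) γ*α = 0 for every α ∈ J, and (2) γ*(i_ξ dθ) = 0 for every ξ ∈ Adm. -/
open MeasureTheory Set Finset
open scoped ContDiff

noncomputable section

namespace VPGeom

variable {E : Type*} [NormedAddCommGroup E] [NormedSpace ℝ E]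

/-- A smooth `k`-form in the function model: jointly smooth and, at each point,
given by an alternating multilinear map on the tangent space. -/
def IsFormK (k : ℕ) (α : E → (Fin k → E) → ℝ) : Prop :=
  ContDiff ℝ ∞ (fun p : E × (Fin k → E) => α p.1 p.2) ∧
    ∀ x : E, ∃ m : AlternatingMap ℝ E ℝ (Fin k), ∀ v, α x v = m v

/-- A smooth `1`-form in the function model. -/
def IsForm1 (θ : E → E → ℝ) : Prop :=
  ContDiff ℝ ∞ (fun p : E × E => θ p.1 p.2) ∧ ∀ x : E, IsLinearMap ℝ (θ x)

/-- A smooth `2`-form in the function model. -/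
def IsForm2 (Ω : E → E → E → ℝ) : Prop :=
  ContDiff ℝ ∞ (fun p : E × E × E => Ω p.1 p.2.1 p.2.2) ∧
    ∀ x : E, ∃ m : AlternatingMap ℝ E ℝ (Fin 2), ∀ u v : E, Ω x u v = m ![u, v]

/-- Exterior derivative of a `1`-form on a vector space
(formula with constant extensions of the tangent vectors). -/
def extd1 (θ : E → E → ℝ) : E → E → E → ℝ := fun x u v =>
  fderiv ℝ (fun y => θ y v) x u - fderiv ℝ (fun y => θ y u) x v

/-- Exterior derivative of a `2`-form on a vector space. -/
def extd2 (Ω : E → E → E → ℝ) : E → E → E → E → ℝ := fun x u v w =>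
  fderiv ℝ (fun y => Ω y v w) x u - fderiv ℝ (fun y => Ω y u w) x v +
    fderiv ℝ (fun y => Ω y u v) x w

/-- Lie derivative of a `1`-form along a vector field (on a vector space). -/
def lie1 (ξ : E → E) (θ : E → E → ℝ) : E → E → ℝ := fun x v =>
  fderiv ℝ (fun y => θ y v) x (ξ x) + θ x (fderiv ℝ ξ x v)

/-- Wedge product of two `1`-forms. -/
def wedge11 (α β : E → E → ℝ) : E → E → E → ℝ := fun x u v =>
  α x u * β x v - α x v * β x u

/-- Wedge product of a `2`-form with a `1`-form. -/
def wedge21 (β : E → E → E → ℝ) (α : E → E → ℝ) : E → E → E → E → ℝ := fun x u v w =>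
  β x u v * α x w - β x u w * α x v + β x v w * α x u

/-- Wedge product of a `1`-form with a `2`-form. -/
def wedge12 (α : E → E → ℝ) (β : E → E → E → ℝ) : E → E → E → E → ℝ := fun x u v w =>
  α x u * β x v w - α x v * β x u w + α x w * β x u v

/-- Interior product of a vector field with a `2`-form. -/
def iota2 (ξ : E → E) (Ω : E → E → E → ℝ) : E → E → ℝ := fun x v => Ω x (ξ x) v

/-- `γ` is a smooth local section, over the open interval `I`, of the bundle over `ℝ`
whose projection ("time coordinate") is `T`. -/
structure IsSection (T : E → ℝ) (γ : ℝ → E) (I : Set ℝ) : Prop where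
  isOpen : IsOpen I
  ordConnected : I.OrdConnected
  nonempty : I.Nonempty
  smooth : ContDiffOn ℝ ∞ γ I
  proj : ∀ t ∈ I, T (γ t) = t

/-- Membership in the `C^∞(E)`-ideal generated by a set of functions. -/
def InIdeal (I₀ : Set (E → ℝ)) (h : E → ℝ) : Prop :=
  ∃ (m : ℕ) (f : Fin m → E → ℝ) (g : Fin m → E → ℝ),
    (∀ j, ContDiff ℝ ∞ (f j)) ∧ (∀ j, g j ∈ I₀) ∧ h = fun x => ∑ j, f j x * g j x


/-! ### Auxiliary lemmas (measure theory on `ℝ`) -/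

section MeasureAux

open Filter Metric Topology

private lemma slope_zero_of_acc' {f : ℝ → ℝ} {S : Set ℝ} {x c : ℝ}
    (hx : x ∈ S) (hS : ∀ y ∈ S, f y = 0) (hacc : (𝓝[S \ {x}] x).NeBot)
    (hder : HasDerivAt f c x) : c = 0 := by
  have h1 : Tendsto (slope f x) (𝓝[S \ {x}] x) (𝓝 c) :=
    (hasDerivAt_iff_tendsto_slope.1 hder).mono_left
      (nhdsWithin_mono x (fun y hy => hy.2))
  have h2 : Tendsto (slope f x) (𝓝[S \ {x}] x) (𝓝 0) := by
    apply tendsto_const_nhds.congr'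
    filter_upwards [self_mem_nhdsWithin] with y hy
    simp [slope, hS y hy.1, hS x hx]
  exact tendsto_nhds_unique h1 h2

private lemma acc_of_density' {S : Set ℝ} {x : ℝ}
    (h : Tendsto (fun r => volume (S ∩ closedBall x r) / volume (closedBall x r))
      (𝓝[>] (0:ℝ)) (𝓝 1)) :
    (𝓝[S \ {x}] x).NeBot := by
  by_contra hbot
  rw [not_neBot, ← empty_mem_iff_bot] at hbot
  rcases mem_nhdsWithin.1 hbot with ⟨U, hUo, hxU, hU⟩
  rcases Metric.isOpen_iff.1 hUo x hxU with ⟨ε, hε, hball⟩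
  have hzero : ∀ r ∈ Ioo (0:ℝ) ε,
      volume (S ∩ closedBall x r) / volume (closedBall x r) = 0 := by
    intro r hr
    have hsub : S ∩ closedBall x r ⊆ {x} := by
      intro y hy
      by_contra hyx
      have : y ∈ U ∩ (S \ {x}) := by
        refine ⟨hball ?_, hy.1, hyx⟩
        have := hy.2
        rw [Metric.mem_closedBall] at this
        rw [Metric.mem_ball]
        exact lt_of_le_of_lt this hr.2
      exact hU this
    have : volume (S ∩ closedBall x r) = 0 :=
      le_antisymm (le_trans (measure_mono hsub) (by simp)) zero_le
    simp [this]
  have h2 : Tendsto (fun r => volume (S ∩ closedBall x r) / volume (closedBall x r))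
      (𝓝[>] (0:ℝ)) (𝓝 0) := by
    apply tendsto_const_nhds.congr'
    filter_upwards [Ioo_mem_nhdsGT_of_mem (by exact ⟨le_refl _, hε⟩ : (0:ℝ) ∈ Ico 0 ε)] with r hr
    exact (hzero r hr).symm
  have := tendsto_nhds_unique h h2
  simp at this

private lemma ae_deriv_zero_on_zero_set' {f F' : ℝ → ℝ} {I S : Set ℝ}
    (hSm : MeasurableSet S) (hS : S ⊆ I)
    (hd : ∀ t ∈ I, HasDerivAt f (F' t) t) (h0 : ∀ t ∈ S, f t = 0) :
    ∀ᵐ x ∂(volume.restrict S), F' x = 0 := by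
  filter_upwards [Besicovitch.ae_tendsto_measure_inter_div volume S,
    ae_restrict_mem hSm] with x hx hxS
  exact slope_zero_of_acc' hxS h0 (acc_of_density' hx) (hd x (hS hxS))

private lemma isOpen_ordConnectedComponent_real {U : Set ℝ} (hU : IsOpen U) {x : ℝ} :
    IsOpen (ordConnectedComponent U x) := by
  rw [Metric.isOpen_iff]
  intro y hy
  rcases Metric.isOpen_iff.1 hU y (ordConnectedComponent_subset hy) with ⟨ε, hε, hball⟩
  refine ⟨ε, hε, fun z hz => mem_ordConnectedComponent.2 <|
    uIcc_subset_uIcc_union_uIcc.trans (union_subset hy (subset_trans ?_ hball))⟩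
  rw [Real.ball_eq_Ioo] at hz ⊢
  exact Set.ordConnected_Ioo.uIcc_subset (by rw [← Real.ball_eq_Ioo]; exact mem_ball_self hε) hz

private lemma component_structure' {U : Set ℝ} (hU : IsOpen U)
    (hb : Bornology.IsBounded U) {x : ℝ} (hx : x ∈ U) :
    ∃ c d : ℝ, c ∉ U ∧ d ∉ U ∧ c ∈ closure U ∧ d ∈ closure U ∧ c ≤ d ∧
      ordConnectedComponent U x = Ioo c d := by
  set C := ordConnectedComponent U x with hC
  have hCo : IsOpen C := isOpen_ordConnectedComponent_real hU
  have hCne : C.Nonempty := ⟨x, self_mem_ordConnectedComponent.2 hx⟩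
  have hCU : C ⊆ U := ordConnectedComponent_subset
  have hCb : Bornology.IsBounded C := hb.subset hCU
  have hbd : BddBelow C := hCb.bddBelow
  have hbu : BddAbove C := hCb.bddAbove
  set c := sInf C
  set d := sSup C
  have hnotinC : ∀ y, y ∈ C → c < y ∧ y < d := by
    intro y hy
    rcases Metric.isOpen_iff.1 hCo y hy with ⟨ε, hε, hball⟩
    constructor
    · have h1 : y - ε/2 ∈ C := hball (by rw [Real.ball_eq_Ioo]; constructor <;> linarith)
      calc c ≤ y - ε/2 := csInf_le hbd h1
        _ < y := by linarith
    · have h1 : y + ε/2 ∈ C := hball (by rw [Real.ball_eq_Ioo]; constructor <;> linarith)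
      calc y < y + ε/2 := by linarith
        _ ≤ d := le_csSup hbu h1
  have hCIoo : C = Ioo c d := by
    apply Set.Subset.antisymm
    · intro y hy
      exact hnotinC y hy
    · intro y hy
      rcases exists_lt_of_csInf_lt hCne hy.1 with ⟨p, hp, hpy⟩
      rcases exists_lt_of_lt_csSup hCne hy.2 with ⟨q, hq, hyq⟩
      exact (Set.instOrdConnectedOrdConnectedComponent (s := U) (x := x)).out hp hq
        ⟨le_of_lt hpy, le_of_lt hyq⟩
  have hcC : c ∉ C := fun h => lt_irrefl c (hnotinC c h).1
  have hdC : d ∉ C := fun h => lt_irrefl d (hnotinC d h).2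
  have key : ∀ e, e ∈ closure C → e ∉ C → e ∉ U := by
    intro e he heC heU
    rcases Metric.isOpen_iff.1 hU e heU with ⟨ε, hε, hball⟩
    rcases Metric.mem_closure_iff.1 he ε hε with ⟨z, hzC, hz⟩
    have h1 : uIcc z e ⊆ U := by
      refine subset_trans ?_ hball
      rw [Real.ball_eq_Ioo]
      apply Set.ordConnected_Ioo.uIcc_subset
      · rw [← Real.ball_eq_Ioo, mem_ball]; rwa [dist_comm]
      · rw [← Real.ball_eq_Ioo]; exact mem_ball_self hε
    have h2 : e ∈ ordConnectedComponent U z := mem_ordConnectedComponent.2 h1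
    have h3 : ordConnectedComponent U z = C := by
      rw [hC]
      exact ordConnectedComponent_eq (mem_ordConnectedComponent.1
        (mem_ordConnectedComponent_comm.1 hzC))
    exact heC (h3 ▸ h2)
  have hcc : c ∈ closure C := csInf_mem_closure hCne hbd
  have hdc : d ∈ closure C := csSup_mem_closure hCne hbu
  refine ⟨c, d, key c hcc hcC, key d hdc hdC, ?_, ?_, ?_, hCIoo⟩
  · exact closure_mono hCU hcc
  · exact closure_mono hCU hdc
  · rcases hCne with ⟨y, hy⟩
    exact le_of_lt (lt_trans (hnotinC y hy).1 (hnotinC y hy).2)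

private lemma integral_Ioo_deriv' {f F' : ℝ → ℝ} {I : Set ℝ} (hIc : ContinuousOn F' I)
    (hd : ∀ t ∈ I, HasDerivAt f (F' t) t) {c d : ℝ} (hcd : c ≤ d) (hsub : Icc c d ⊆ I) :
    ∫ t in Ioo c d, F' t = f d - f c := by
  rw [← integral_Ioc_eq_integral_Ioo, ← intervalIntegral.integral_of_le hcd]
  apply intervalIntegral.integral_eq_sub_of_hasDerivAt
  · intro x hx
    rw [uIcc_of_le hcd] at hx
    exact hd x (hsub hx)
  · apply ContinuousOn.intervalIntegrable
    rw [uIcc_of_le hcd]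
    exact hIc.mono hsub

/-- If `f` is differentiable on an open order-connected set `I` with derivative `F'`,
`K ⊆ I` is compact and `f` vanishes on the frontier of `K`, then `∫_K F' = 0`. -/
private lemma setIntegral_deriv_eq_zero {I : Set ℝ} (hIo : I.OrdConnected)
    {K : Set ℝ} (hK : IsCompact K) (hKI : K ⊆ I)
    {f F' : ℝ → ℝ} (hd : ∀ t ∈ I, HasDerivAt f (F' t) t) (hc : ContinuousOn F' I)
    (h0 : ∀ t ∈ frontier K, f t = 0) : ∫ t in K, F' t = 0 := by
  rcases K.eq_empty_or_nonempty with rfl | hKne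
  · simp
  have hKcl : IsClosed K := hK.isClosed
  have hKm : MeasurableSet K := hKcl.measurableSet
  have hfr : frontier K = K \ interior K := by rw [hKcl.frontier_eq]
  set U := interior K with hUdef
  have hUK : U ⊆ K := interior_subset
  have hintK : IntegrableOn F' K := (hc.mono hKI).integrableOn_compact hK
  have hsplit : ∫ t in K, F' t = (∫ t in U, F' t) + ∫ t in K \ U, F' t := by
    rw [← setIntegral_union disjoint_sdiff_self_right (hKm.diff isOpen_interior.measurableSet)
      (hintK.mono_set hUK) (hintK.mono_set diff_subset), union_diff_cancel hUK]
  have hpart2 : ∫ t in K \ U, F' t = 0 := by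
    have hfm : MeasurableSet (K \ U) := hKm.diff isOpen_interior.measurableSet
    have hae : ∀ᵐ x ∂(volume.restrict (K \ U)), F' x = 0 := by
      apply ae_deriv_zero_on_zero_set' hfm (fun x hx => hKI hx.1) hd
      intro t ht
      exact h0 t (hfr ▸ ht)
    calc ∫ t in K \ U, F' t = ∫ _t in K \ U, (0:ℝ) :=
          integral_congr_ae (by filter_upwards [hae] with x hx; simp [hx])
      _ = 0 := integral_zero _ _
  have hpart3 : ∫ t in U, F' t = 0 := by
    have hUo : IsOpen U := isOpen_interior
    have hUb : Bornology.IsBounded U := hK.isBounded.subset hUK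
    set T : Set (Set ℝ) := (fun q => ordConnectedComponent U q) '' (U ∩ Set.range ((↑) : ℚ → ℝ))
      with hT
    have hTct : T.Countable :=
      ((Set.countable_range ((↑) : ℚ → ℝ)).mono inter_subset_right).image _
    have hTcomp : ∀ C ∈ T, ∃ q ∈ U, C = ordConnectedComponent U q := by
      rintro C ⟨q, hq, rfl⟩; exact ⟨q, hq.1, rfl⟩
    have hTeq : ∀ C ∈ T, ∀ z ∈ C, C = ordConnectedComponent U z := by
      intro C hC z hz
      rcases hTcomp C hC with ⟨q, _hq, rfl⟩
      exact ordConnectedComponent_eq (mem_ordConnectedComponent.1 hz)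
    have hTdisj : T.PairwiseDisjoint id := by
      intro C hC D hD hne
      rw [Function.onFun, Set.disjoint_left]
      intro z hzC hzD
      exact hne ((hTeq C hC z hzC).trans (hTeq D hD z hzD).symm)
    have hUunion : U = ⋃₀ T := by
      apply Set.Subset.antisymm
      · intro x hx
        have hCo : IsOpen (ordConnectedComponent U x) := isOpen_ordConnectedComponent_real hUo
        have hCx : x ∈ ordConnectedComponent U x := self_mem_ordConnectedComponent.2 hx
        rcases Metric.isOpen_iff.1 hCo x hCx with ⟨ε, hε, hball⟩
        rcases exists_rat_btwn (show x - ε < x + ε by linarith) with ⟨q, hq1, hq2⟩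
        have hqC : (q:ℝ) ∈ ordConnectedComponent U x := by
          apply hball; rw [Real.ball_eq_Ioo]; exact ⟨hq1, hq2⟩
        have : ordConnectedComponent U x = ordConnectedComponent U q :=
          ordConnectedComponent_eq (mem_ordConnectedComponent.1 hqC)
        exact ⟨ordConnectedComponent U q, ⟨q, ⟨ordConnectedComponent_subset hqC, ⟨q, rfl⟩⟩, rfl⟩,
          this ▸ hCx⟩
      · intro x hx
        rcases hx with ⟨C, hC, hxC⟩
        rcases hTcomp C hC with ⟨q, _, rfl⟩
        exact ordConnectedComponent_subset hxC
    have hCzero : ∀ C ∈ T, ∫ t in C, F' t = 0 := by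
      intro C hC
      rcases hTcomp C hC with ⟨q, hq, rfl⟩
      rcases component_structure' hUo hUb hq with ⟨c, d, hcU, hdU, hcc, hdc, hcd, hIoo⟩
      have hclU : closure U ⊆ K := hKcl.closure_subset_iff.2 hUK
      have hfc : f c = 0 := h0 c (hfr ▸ ⟨hclU hcc, fun h => hcU h⟩)
      have hfd : f d = 0 := h0 d (hfr ▸ ⟨hclU hdc, fun h => hdU h⟩)
      have hIcc : Icc c d ⊆ I := hIo.out (hKI (hclU hcc)) (hKI (hclU hdc))
      rw [hIoo, integral_Ioo_deriv' hc hd hcd hIcc, hfc, hfd]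
      ring
    have : Countable ↥T := hTct.to_subtype
    have hmeas : ∀ C : ↥T, MeasurableSet (C : Set ℝ) := by
      rintro ⟨C, hC⟩
      rcases hTcomp C hC with ⟨q, _, rfl⟩
      exact (isOpen_ordConnectedComponent_real hUo).measurableSet
    have hdisj : Pairwise (Function.onFun Disjoint (fun C : ↥T => (C : Set ℝ))) := by
      rintro ⟨C, hC⟩ ⟨D, hD⟩ hne
      exact hTdisj hC hD (fun h => hne (Subtype.ext h))
    have hUeq : (⋃ C : ↥T, (C : Set ℝ)) = U := by
      rw [hUunion, sUnion_eq_iUnion]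
    have hint : IntegrableOn F' (⋃ C : ↥T, (C : Set ℝ)) := by
      rw [hUeq]; exact hintK.mono_set hUK
    have hiU := MeasureTheory.integral_iUnion hmeas hdisj hint (f := F')
    rw [hUeq] at hiU
    rw [hiU]
    have hz : ∀ C : ↥T, ∫ t in (C : Set ℝ), F' t = 0 := fun ⟨C, hC⟩ => hCzero C hC
    simp [hz]
  rw [hsplit, hpart2, hpart3]; ring

private lemma eqOn_zero_of_ae_open {h : ℝ → ℝ} {I : Set ℝ} (hI : IsOpen I)
    (hc : ContinuousOn h I) (ha : ∀ᵐ x, x ∈ I → h x = 0) : ∀ t ∈ I, h t = 0 := by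
  intro t ht
  by_contra hne
  have hca : ContinuousAt h t := (hc t ht).continuousAt (hI.mem_nhds ht)
  have hev : ∀ᶠ x in 𝓝 t, h x ≠ 0 ∧ x ∈ I := (hca.eventually_ne hne).and (hI.mem_nhds ht)
  rcases _root_.eventually_nhds_iff.1 hev with ⟨W, hW, hWo, htW⟩
  have hWsub : W ⊆ {x | ¬(x ∈ I → h x = 0)} := fun x hx => by
    intro hcon
    exact (hW x hx).1 (hcon (hW x hx).2)
  have h1 : volume W = 0 := measure_mono_null hWsub (ae_iff.1 ha)
  have h2 : 0 < volume W := hWo.measure_pos volume ⟨t, htW⟩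
  exact absurd h1 (ne_of_gt h2)

end MeasureAux

/-! ### Auxiliary lemmas (calculus for 1-forms) -/

section CalcAux

private lemma theta_clm {θ : E → E → ℝ} (hθ : IsForm1 θ) (x : E) :
    ∃ G : E →L[ℝ] ℝ, ∀ v, G v = θ x v := by
  have hcont : Continuous (θ x) := by
    have : Continuous (fun p : E × E => θ p.1 p.2) := hθ.1.continuous
    exact this.comp (Continuous.prodMk_right x)
  exact ⟨{ toLinearMap := IsLinearMap.mk' (θ x) (hθ.2 x), cont := hcont }, fun v => rfl⟩

private lemma hasDerivAt_theta_comp {θ : E → E → ℝ} (hθ : IsForm1 θ)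
    {x v : ℝ → E} {t : ℝ} {X V : E} (hx : HasDerivAt x X t) (hv : HasDerivAt v V t) :
    HasDerivAt (fun s => θ (x s) (v s))
      (fderiv ℝ (fun y => θ y (v t)) (x t) X + θ (x t) V) t := by
  set Θ : E × E → ℝ := fun p => θ p.1 p.2 with hΘdef
  have hΘ : Differentiable ℝ Θ := hθ.1.differentiable (by norm_num)
  have hp : HasDerivAt (fun s => (x s, v s)) (X, V) t := hx.prodMk hv
  have hc : HasDerivAt (fun s => Θ (x s, v s)) (fderiv ℝ Θ (x t, v t) (X, V)) t :=
    by have h := (hΘ (x t, v t)).hasFDerivAt.comp_hasDerivAt t hp; exact h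
  have h1 : HasFDerivAt (fun y : E => (y, v t))
      ((ContinuousLinearMap.id ℝ E).prod 0) (x t) :=
    (hasFDerivAt_id (x t)).prodMk (hasFDerivAt_const (v t) (x t))
  have h2 : HasFDerivAt (fun y => θ y (v t))
      ((fderiv ℝ Θ (x t, v t)).comp ((ContinuousLinearMap.id ℝ E).prod 0)) (x t) :=
    by have h := ((hΘ (x t, v t)).hasFDerivAt).comp (x t) h1; exact h
  have e1 : fderiv ℝ (fun y => θ y (v t)) (x t) X = fderiv ℝ Θ (x t, v t) (X, 0) := by
    rw [h2.fderiv]; rfl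
  obtain ⟨G, hG⟩ := theta_clm hθ (x t)
  have h3 : HasFDerivAt (fun w : E => ((x t), w))
      ((0 : E →L[ℝ] E).prod (ContinuousLinearMap.id ℝ E)) (v t) :=
    (hasFDerivAt_const (x t) (v t)).prodMk (hasFDerivAt_id (v t))
  have h4 : HasFDerivAt (fun w => θ (x t) w)
      ((fderiv ℝ Θ (x t, v t)).comp ((0 : E →L[ℝ] E).prod (ContinuousLinearMap.id ℝ E))) (v t) :=
    ((hΘ (x t, v t)).hasFDerivAt).comp (v t) h3
  have h5 : HasFDerivAt (fun w => θ (x t) w) G (v t) := by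
    have hGa := G.hasFDerivAt (x := v t)
    apply hGa.congr_of_eventuallyEq
    filter_upwards with w using (hG w).symm
  have e2 : θ (x t) V = fderiv ℝ Θ (x t, v t) (0, V) := by
    rw [← hG V, ← h4.unique h5]; rfl
  have e3 : fderiv ℝ Θ (x t, v t) (X, V) =
      fderiv ℝ (fun y => θ y (v t)) (x t) X + θ (x t) V := by
    rw [e1, e2, ← ContinuousLinearMap.map_add]
    norm_num
  exact e3 ▸ hc

private lemma fderiv_theta_eq {θ : E → E → ℝ} (hθ : IsForm1 θ) (x u v : E) :
    fderiv ℝ (fun y => θ y v) x u = fderiv ℝ (fun p : E × E => θ p.1 p.2) (x, v) (u, 0) := by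
  have hΘ : Differentiable ℝ (fun p : E × E => θ p.1 p.2) := hθ.1.differentiable (by norm_num)
  have h1 : HasFDerivAt (fun y : E => (y, v)) ((ContinuousLinearMap.id ℝ E).prod 0) x :=
    (hasFDerivAt_id x).prodMk (hasFDerivAt_const v x)
  have h2 : HasFDerivAt (fun y => θ y v)
      ((fderiv ℝ (fun p : E × E => θ p.1 p.2) (x, v)).comp
        ((ContinuousLinearMap.id ℝ E).prod 0)) x :=
    by have h := ((hΘ (x, v)).hasFDerivAt).comp x h1; exact h
  rw [h2.fderiv]; rfl

private lemma continuous_fderiv_theta {θ : E → E → ℝ} (hθ : IsForm1 θ) :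
    Continuous (fun q : E × E × E => fderiv ℝ (fun y => θ y q.2.2) q.1 q.2.1) := by
  have heq : (fun q : E × E × E => fderiv ℝ (fun y => θ y q.2.2) q.1 q.2.1) =
      fun q : E × E × E =>
        (fderiv ℝ (fun p : E × E => θ p.1 p.2) (q.1, q.2.2)) (q.2.1, 0) := by
    funext q; exact fderiv_theta_eq hθ q.1 q.2.1 q.2.2
  rw [heq]
  have hfd : Continuous (fderiv ℝ (fun p : E × E => θ p.1 p.2)) :=
    hθ.1.continuous_fderiv (by norm_num)
  exact isBoundedBilinearMap_apply.continuous.comp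
    ((hfd.comp (continuous_fst.prodMk (continuous_snd.comp continuous_snd))).prodMk
      ((continuous_fst.comp continuous_snd).prodMk continuous_const))

private lemma hasDerivAt_theta_curve {θ : E → E → ℝ} (hθ : IsForm1 θ) {ξ : E → E}
    (hξ : ContDiff ℝ ∞ ξ) {γ : ℝ → E} {t : ℝ} (hγd : HasDerivAt γ (deriv γ t) t) :
    HasDerivAt (fun s => θ (γ s) (ξ (γ s)))
      (lie1 ξ θ (γ t) (deriv γ t) - extd1 θ (γ t) (ξ (γ t)) (deriv γ t)) t := by
  have hv : HasDerivAt (fun s => ξ (γ s)) (fderiv ℝ ξ (γ t) (deriv γ t)) t :=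
    ((hξ.differentiable (by norm_num)) (γ t)).hasFDerivAt.comp_hasDerivAt t hγd
  have h := hasDerivAt_theta_comp hθ hγd hv
  convert h using 1
  simp only [lie1, extd1]
  ring

end CalcAux

end VPGeom

namespace VPGeom

variable {N : Type*} [NormedAddCommGroup N] [NormedSpace ℝ N]

/-- `π`-basic functions on `E = ℝ × N`: pullbacks of smooth functions on `ℝ`. -/
def IsBasic (g : ℝ × N → ℝ) : Prop :=
  ∃ gbase : ℝ → ℝ, ContDiff ℝ ∞ gbase ∧ ∀ x : ℝ × N, g x = gbase x.1

/-- `γ` (a section of `π : ℝ × N → ℝ` over the open interval `I`) is a solution of the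
variational problem `(θ, J, Adm)`: it satisfies the constraints `γ*α = 0` for `α ∈ J`, and for
every compact `K ⊆ I` the variation of the action along any admissible variation vanishing at
`γ(∂K)` is zero. -/
def IsVPSolution (θ : (ℝ × N) → (ℝ × N) → ℝ)
    (J : Set ((k : ℕ) × ((ℝ × N) → (Fin k → ℝ × N) → ℝ)))
    (Adm : Set ((ℝ × N) → ℝ × N)) (γ : ℝ → ℝ × N) (I : Set ℝ) : Prop :=
  (∀ α ∈ J, ∀ t ∈ I, α.2 (γ t) (fun _ => deriv γ t) = 0) ∧
  ∀ K : Set ℝ, IsCompact K → K ⊆ I →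
    ∀ ξ ∈ Adm, (∀ t ∈ frontier K, ξ (γ t) = 0) →
      ∫ t in K, lie1 ξ θ (γ t) (deriv γ t) = 0

section MainAux

open Filter Metric Topology

private lemma lie1_basic_smul {θ : (ℝ × N) → (ℝ × N) → ℝ} (hθ : IsForm1 θ)
    {ξ : (ℝ × N) → ℝ × N} (hξ : ContDiff ℝ ∞ ξ) {g : ℝ → ℝ} (hg : ContDiff ℝ ∞ g)
    {x v : ℝ × N} (hv1 : v.1 = 1) :
    lie1 (fun y => g y.1 • ξ y) θ x v =
      g x.1 * lie1 ξ θ x v + deriv g x.1 * θ x (ξ x) := by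
  have hgd : HasDerivAt g (deriv g x.1) x.1 := (hg.differentiable (by norm_num) x.1).hasDerivAt
  have hfst : HasFDerivAt (fun y : ℝ × N => y.1) (ContinuousLinearMap.fst ℝ ℝ N) x :=
    (ContinuousLinearMap.fst ℝ ℝ N).hasFDerivAt
  have hc : HasFDerivAt (fun y : ℝ × N => g y.1)
      ((deriv g x.1) • ContinuousLinearMap.fst ℝ ℝ N) x := hgd.comp_hasFDerivAt x hfst
  have hξd : HasFDerivAt ξ (fderiv ℝ ξ x) x := (hξ.differentiable (by norm_num) x).hasFDerivAt
  have hη : HasFDerivAt (fun y : ℝ × N => g y.1 • ξ y)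
      (g x.1 • fderiv ℝ ξ x +
        ((deriv g x.1) • ContinuousLinearMap.fst ℝ ℝ N).smulRight (ξ x)) x :=
    hc.smul hξd
  have hfd : fderiv ℝ (fun y : ℝ × N => g y.1 • ξ y) x v =
      g x.1 • fderiv ℝ ξ x v + (deriv g x.1) • ξ x := by
    rw [hη.fderiv]
    simp [ContinuousLinearMap.smulRight_apply, hv1]
  simp only [lie1]
  rw [hfd]
  have hmap : θ x (g x.1 • fderiv ℝ ξ x v + deriv g x.1 • ξ x) =
      g x.1 * θ x (fderiv ℝ ξ x v) + deriv g x.1 * θ x (ξ x) := by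
    rw [(hθ.2 x).map_add, (hθ.2 x).map_smul, (hθ.2 x).map_smul, smul_eq_mul, smul_eq_mul]
  rw [hmap]
  have hsm : fderiv ℝ (fun y => θ y v) x (g x.1 • ξ x) =
      g x.1 * fderiv ℝ (fun y => θ y v) x (ξ x) := by
    rw [ContinuousLinearMap.map_smul, smul_eq_mul]
  rw [hsm]
  ring

end MainAux

/-- If `Adm` is `B(π)`-linear, then a section `γ` of `π` over an open
interval `I` is a solution of the variational problem `(θ, J, Adm)` if and only if
`γ*α = 0` for all `α ∈ J` and `γ*(i_ξ dθ) = 0` for all `ξ ∈ Adm`. -/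
theorem vp_solution_iff_geometric
    (θ : (ℝ × N) → (ℝ × N) → ℝ) (hθ : IsForm1 θ)
    (J : Set ((k : ℕ) × ((ℝ × N) → (Fin k → ℝ × N) → ℝ)))
    (hJ : ∀ α ∈ J, IsFormK α.1 α.2)
    (Adm : Set ((ℝ × N) → ℝ × N)) (hAdm : ∀ ξ ∈ Adm, ContDiff ℝ ∞ ξ)
    (hBlin : ∀ g : (ℝ × N) → ℝ, IsBasic g → ∀ ξ ∈ Adm, (fun x => g x • ξ x) ∈ Adm)
    (γ : ℝ → ℝ × N) (I : Set ℝ) (hγ : IsSection Prod.fst γ I) :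
    IsVPSolution θ J Adm γ I ↔
      ((∀ α ∈ J, ∀ t ∈ I, α.2 (γ t) (fun _ => deriv γ t) = 0) ∧
        (∀ ξ ∈ Adm, ∀ t ∈ I, extd1 θ (γ t) (ξ (γ t)) (deriv γ t) = 0)) := by
  obtain ⟨hIopen, hIord, _hIne, hγsm, hγproj⟩ := hγ
  have hγd : ∀ t ∈ I, HasDerivAt γ (deriv γ t) t := fun t ht =>
    ((hγsm.differentiableOn (by norm_num)).differentiableAt (hIopen.mem_nhds ht)).hasDerivAt
  have hγc : ContinuousOn γ I := hγsm.continuousOn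
  have hγdc : ContinuousOn (deriv γ) I :=
    hγsm.continuousOn_deriv_of_isOpen hIopen (by norm_num)
  have hγd1 : ∀ t ∈ I, (deriv γ t).1 = 1 := by
    intro t ht
    have h1 : HasDerivAt (fun s => (γ s).1) ((deriv γ t).1) t := by
      have h := (ContinuousLinearMap.fst ℝ ℝ N).hasFDerivAt.comp_hasDerivAt t (hγd t ht)
      exact h
    have h2 : (fun s => (γ s).1) =ᶠ[nhds t] (fun s => s) := by
      filter_upwards [hIopen.mem_nhds ht] with s hs using hγproj s hs
    have h3 : HasDerivAt (fun s : ℝ => s) ((deriv γ t).1) t := h1.congr_of_eventuallyEq h2.symm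
    simpa using h3.unique (hasDerivAt_id t)
  have hθapp : ∀ (u w : ℝ → ℝ × N), ContinuousOn u I → ContinuousOn w I →
      ContinuousOn (fun t => θ (u t) (w t)) I := by
    intro u w hu hw
    simpa [Function.comp_def] using hθ.1.continuous.comp_continuousOn (hu.prodMk hw)
  have hfdθ : ∀ (u w : ℝ → ℝ × N), ContinuousOn u I → ContinuousOn w I →
      ContinuousOn (fun t => fderiv ℝ (fun y => θ y (w t)) (γ t) (u t)) I := by
    intro u w hu hw
    simpa [Function.comp_def] using
      (continuous_fderiv_theta hθ).comp_continuousOn (hγc.prodMk (hu.prodMk hw))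
  have happc : ∀ ξ : (ℝ × N) → ℝ × N, ContDiff ℝ ∞ ξ →
      ContinuousOn (fun t => fderiv ℝ ξ (γ t) (deriv γ t)) I := by
    intro ξ hξ
    have h0 : ContinuousOn (fun t => fderiv ℝ ξ (γ t)) I := by
      simpa [Function.comp_def] using (hξ.continuous_fderiv (by norm_num)).comp_continuousOn hγc
    have h1 : ContinuousOn (fun t => (fderiv ℝ ξ (γ t), deriv γ t)) I := h0.prodMk hγdc
    simpa [Function.comp_def] using isBoundedBilinearMap_apply.continuous.comp_continuousOn h1
  have hξγc : ∀ ξ : (ℝ × N) → ℝ × N, ContDiff ℝ ∞ ξ →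
      ContinuousOn (fun t => ξ (γ t)) I := by
    intro ξ hξ
    simpa [Function.comp_def] using hξ.continuous.comp_continuousOn hγc
  have hfθc : ∀ ξ : (ℝ × N) → ℝ × N, ContDiff ℝ ∞ ξ →
      ContinuousOn (fun t => θ (γ t) (ξ (γ t))) I := fun ξ hξ =>
    hθapp γ (fun t => ξ (γ t)) hγc (hξγc ξ hξ)
  have hLc : ∀ ξ : (ℝ × N) → ℝ × N, ContDiff ℝ ∞ ξ →
      ContinuousOn (fun t => lie1 ξ θ (γ t) (deriv γ t)) I := by
    intro ξ hξ
    simp only [lie1]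
    exact (hfdθ (fun t => ξ (γ t)) (deriv γ) (hξγc ξ hξ) hγdc).add
      (hθapp γ (fun t => fderiv ℝ ξ (γ t) (deriv γ t)) hγc (happc ξ hξ))
  have hhc : ∀ ξ : (ℝ × N) → ℝ × N, ContDiff ℝ ∞ ξ →
      ContinuousOn (fun t => extd1 θ (γ t) (ξ (γ t)) (deriv γ t)) I := by
    intro ξ hξ
    simp only [extd1]
    exact (hfdθ (fun t => ξ (γ t)) (deriv γ) (hξγc ξ hξ) hγdc).sub
      (hfdθ (deriv γ) (fun t => ξ (γ t)) hγdc (hξγc ξ hξ))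
  constructor
  · rintro ⟨hcon, hvar⟩
    refine ⟨hcon, ?_⟩
    intro ξ hξA t ht
    have hξ : ContDiff ℝ ∞ ξ := hAdm ξ hξA
    have hae : ∀ᵐ x, x ∈ I → extd1 θ (γ x) (ξ (γ x)) (deriv γ x) = 0 := by
      apply hIopen.ae_eq_zero_of_integral_contDiff_smul_eq_zero
        ((hhc ξ hξ).locallyIntegrableOn hIopen.measurableSet)
      intro g hg hgsupp hgsub
      by_cases hsupp : tsupport g = ∅
      · have hg0 : ∀ x, g x = 0 := fun x =>
          image_eq_zero_of_notMem_tsupport (by rw [hsupp]; exact notMem_empty x)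
        simp [hg0]
      have hne : (tsupport g).Nonempty := nonempty_iff_ne_empty.2 hsupp
      have hcpt : IsCompact (tsupport g) := hgsupp
      set a := sInf (tsupport g) with ha
      set b := sSup (tsupport g) with hb
      have hamem : a ∈ tsupport g := hcpt.sInf_mem hne
      have hbmem : b ∈ tsupport g := hcpt.sSup_mem hne
      have haI : a ∈ I := hgsub hamem
      have hbI : b ∈ I := hgsub hbmem
      have hab : a ≤ b := csInf_le_csSup hne hcpt.bddBelow hcpt.bddAbove
      have hIccI : Icc a b ⊆ I := hIord.out haI hbI
      have hsuppIcc : tsupport g ⊆ Icc a b := fun x hx =>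
        ⟨csInf_le hcpt.bddBelow hx, le_csSup hcpt.bddAbove hx⟩
      have hcl : IsClosed {x : ℝ | g x = 0} := isClosed_eq hg.continuous continuous_const
      have hga : g a = 0 := by
        have hsub : Iio a ⊆ {x | g x = 0} := by
          intro x hx
          by_contra hgx
          exact absurd (csInf_le hcpt.bddBelow
            (subset_tsupport g (by simpa [Function.mem_support] using hgx))) (not_le.2 hx)
        exact hcl.closure_subset_iff.2 hsub (by rw [closure_Iio]; exact self_mem_Iic)
      have hgb : g b = 0 := by
        have hsub : Ioi b ⊆ {x | g x = 0} := by
          intro x hx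
          by_contra hgx
          exact absurd (le_csSup hcpt.bddAbove
            (subset_tsupport g (by simpa [Function.mem_support] using hgx))) (not_le.2 hx)
        exact hcl.closure_subset_iff.2 hsub (by rw [closure_Ioi]; exact self_mem_Ici)
      have hgbasic : IsBasic (fun x : ℝ × N => g x.1) := ⟨g, hg, fun x => rfl⟩
      have hξ'A : (fun x : ℝ × N => g x.1 • ξ x) ∈ Adm := hBlin _ hgbasic ξ hξA
      have hfrab : frontier (Icc a b) ⊆ {a, b} := by
        rw [frontier, isClosed_Icc.closure_eq, interior_Icc]
        rintro x ⟨hx1, hx2⟩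
        rcases eq_or_lt_of_le hx1.1 with h | h
        · exact Or.inl h.symm
        rcases eq_or_lt_of_le hx1.2 with h' | h'
        · exact Or.inr h'
        exact absurd ⟨h, h'⟩ hx2
      have hbd : ∀ s ∈ frontier (Icc a b), (fun x : ℝ × N => g x.1 • ξ x) (γ s) = 0 := by
        intro s hs
        have hsab : s = a ∨ s = b := hfrab hs
        have hsI : s ∈ I := by rcases hsab with rfl | rfl; exacts [haI, hbI]
        have hg0 : g ((γ s).1) = 0 := by
          rw [hγproj s hsI]
          rcases hsab with rfl | rfl
          exacts [hga, hgb]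
        simp [hg0]
      have hint0 := hvar (Icc a b) isCompact_Icc hIccI _ hξ'A hbd
      have hP : ∀ s ∈ I, HasDerivAt (fun u => g u * θ (γ u) (ξ (γ u)))
          (deriv g s * θ (γ s) (ξ (γ s)) +
            g s * (lie1 ξ θ (γ s) (deriv γ s) - extd1 θ (γ s) (ξ (γ s)) (deriv γ s))) s :=
        fun s hs => ((hg.differentiable (by norm_num) s).hasDerivAt).mul
          (hasDerivAt_theta_curve hθ hξ (hγd s hs))
      set Q : ℝ → ℝ := fun s => deriv g s * θ (γ s) (ξ (γ s)) +
          g s * (lie1 ξ θ (γ s) (deriv γ s) - extd1 θ (γ s) (ξ (γ s)) (deriv γ s)) with hQ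
      have hQc : ContinuousOn Q I :=
        (((hg.continuous_deriv (by norm_num)).continuousOn).mul (hfθc ξ hξ)).add
          ((hg.continuous.continuousOn).mul ((hLc ξ hξ).sub (hhc ξ hξ)))
      have hcongr : ∀ s ∈ Icc a b, lie1 (fun x : ℝ × N => g x.1 • ξ x) θ (γ s) (deriv γ s) =
          Q s + g s * extd1 θ (γ s) (ξ (γ s)) (deriv γ s) := by
        intro s hs
        have hsI := hIccI hs
        rw [lie1_basic_smul hθ hξ hg (hγd1 s hsI), hγproj s hsI, hQ]
        ring
      have h1 : ∫ s in Icc a b, lie1 (fun x : ℝ × N => g x.1 • ξ x) θ (γ s) (deriv γ s) =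
          ∫ s in Icc a b, (Q s + g s * extd1 θ (γ s) (ξ (γ s)) (deriv γ s)) :=
        setIntegral_congr_fun measurableSet_Icc (fun s hs => hcongr s hs)
      have hQint : IntegrableOn Q (Icc a b) :=
        (hQc.mono hIccI).integrableOn_compact isCompact_Icc
      have hghint : IntegrableOn
          (fun s => g s * extd1 θ (γ s) (ξ (γ s)) (deriv γ s)) (Icc a b) :=
        (((hg.continuous.continuousOn).mul ((hhc ξ hξ).mono hIccI))).integrableOn_compact
          isCompact_Icc
      have h2 : ∫ s in Icc a b, (Q s + g s * extd1 θ (γ s) (ξ (γ s)) (deriv γ s)) =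
          (∫ s in Icc a b, Q s) +
            ∫ s in Icc a b, g s * extd1 θ (γ s) (ξ (γ s)) (deriv γ s) :=
        integral_add hQint hghint
      have h3 : ∫ s in Icc a b, Q s = 0 := by
        rw [integral_Icc_eq_integral_Ioc, ← intervalIntegral.integral_of_le hab]
        rw [intervalIntegral.integral_eq_sub_of_hasDerivAt
          (fun s hs => hP s (hIccI (by rwa [uIcc_of_le hab] at hs)))
          (by apply ContinuousOn.intervalIntegrable
              rw [uIcc_of_le hab]; exact hQc.mono hIccI)]
        rw [hga, hgb]
        ring
      have h4 : ∫ s in Icc a b, g s * extd1 θ (γ s) (ξ (γ s)) (deriv γ s) = 0 := by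
        rw [h1, h2, h3] at hint0
        linarith
      have h5 : (fun x => g x • extd1 θ (γ x) (ξ (γ x)) (deriv γ x)) =
          (Icc a b).indicator (fun x => g x * extd1 θ (γ x) (ξ (γ x)) (deriv γ x)) := by
        funext x
        by_cases hx : x ∈ Icc a b
        · simp [Set.indicator_of_mem hx, smul_eq_mul]
        · have hg0 : g x = 0 :=
            image_eq_zero_of_notMem_tsupport (fun h => hx (hsuppIcc h))
          simp [Set.indicator_of_notMem hx, hg0]
      rw [h5, integral_indicator measurableSet_Icc]
      exact h4
    exact eqOn_zero_of_ae_open hIopen (hhc ξ hξ) hae t ht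
  · rintro ⟨hcon, hgeo⟩
    refine ⟨hcon, ?_⟩
    intro K hKcpt hKI ξ hξA hbd
    have hξ : ContDiff ℝ ∞ ξ := hAdm ξ hξA
    have hF : ∀ t ∈ I, HasDerivAt (fun s => θ (γ s) (ξ (γ s)))
        (lie1 ξ θ (γ t) (deriv γ t) - extd1 θ (γ t) (ξ (γ t)) (deriv γ t)) t :=
      fun t ht => hasDerivAt_theta_curve hθ hξ (hγd t ht)
    have hcongr : ∀ t ∈ K, lie1 ξ θ (γ t) (deriv γ t) =
        lie1 ξ θ (γ t) (deriv γ t) - extd1 θ (γ t) (ξ (γ t)) (deriv γ t) := by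
      intro t ht
      rw [hgeo ξ hξA t (hKI ht)]
      ring
    rw [setIntegral_congr_fun hKcpt.isClosed.measurableSet (fun t ht => hcongr t ht)]
    apply setIntegral_deriv_eq_zero hIord hKcpt hKI hF ((hLc ξ hξ).sub (hhc ξ hξ))
    intro t ht
    have hξ0 : ξ (γ t) = 0 := hbd t ht
    rw [hξ0, (hθ.2 (γ t)).map_zero]

end VPGeom
end
end

section
/- Let (Ω, J, Adm) be a geometric variational problem on π : E = ℝ × N → ℝ with J a set of smooth 1-forms. A vector field Z on E has the property that each of its integral curves is, after a translation of the curve parameter, a solution section of (Ω, J, Adm), if and only if: (1) i_Zα = 0 for all α ∈ J, (2) i_Z i_ξ Ω = 0 for all ξ ∈ Adm, and (3) i_Zτ = 1. -/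
open MeasureTheory Set Finset
open scoped ContDiff

noncomputable section

namespace VPGeom

variable {N : Type*} [NormedAddCommGroup N] [NormedSpace ℝ N]

/-- Solution sections of the geometric variational problem `(Ω, J, Adm)` on `π : ℝ × N → ℝ`,
where `J` is a set of `1`-forms. -/
def IsGVPSolution (Ω : (ℝ × N) → (ℝ × N) → (ℝ × N) → ℝ)
    (J : Set ((ℝ × N) → (ℝ × N) → ℝ)) (Adm : Set ((ℝ × N) → ℝ × N))
    (γ : ℝ → ℝ × N) (I : Set ℝ) : Prop :=
  IsSection Prod.fst γ I ∧
  (∀ α ∈ J, ∀ t ∈ I, α (γ t) (deriv γ t) = 0) ∧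
  (∀ ξ ∈ Adm, ∀ t ∈ I, Ω (γ t) (ξ (γ t)) (deriv γ t) = 0)

/-- `c` is an integral curve of the vector field `Z` on the open interval `I`. -/
def IsIntCurveOn (Z : (ℝ × N) → ℝ × N) (c : ℝ → ℝ × N) (I : Set ℝ) : Prop :=
  IsOpen I ∧ I.OrdConnected ∧ I.Nonempty ∧ ∀ t ∈ I, HasDerivAt c (Z (c t)) t

/-- An integral curve of a smooth vector field is smooth on its (open) domain. -/
lemma contDiffOn_of_integralCurve {F : Type*} [NormedAddCommGroup F] [NormedSpace ℝ F]
    (Z : F → F) (hZ : ContDiff ℝ ∞ Z) {c : ℝ → F} {I : Set ℝ} (hI : IsOpen I)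
    (hc : ∀ t ∈ I, HasDerivAt c (Z (c t)) t) : ContDiffOn ℝ ∞ c I := by
  have hderiv : Set.EqOn (deriv c) (fun t => Z (c t)) I := fun t ht => (hc t ht).deriv
  have hdiff : DifferentiableOn ℝ c I := fun t ht =>
    (hc t ht).differentiableAt.differentiableWithinAt
  have key : ∀ n : ℕ, ContDiffOn ℝ n c I := by
    intro n
    induction n with
    | zero => exact contDiffOn_zero.mpr hdiff.continuousOn
    | succ n ih =>
      have : ContDiffOn ℝ ((n : WithTop ℕ∞) + 1) c I := by
        rw [contDiffOn_succ_iff_deriv_of_isOpen hI]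
        refine ⟨hdiff, by simp, ?_⟩
        exact ((hZ.of_le (by exact_mod_cast le_top)).comp_contDiffOn ih).congr hderiv
      exact_mod_cast this
  exact contDiffOn_infty.mpr key

/-- A vector field `Z` has the property that each of its integral curves is,
after a translation of the curve parameter, a solution section of the GVP `(Ω, J, Adm)` if and
only if `i_Z α = 0` for all `α ∈ J`, `i_Z i_ξ Ω = 0` for all `ξ ∈ Adm`, and `i_Z τ = 1`. -/
theorem vectorField_solution_iff [CompleteSpace N]
    (Ω : (ℝ × N) → (ℝ × N) → (ℝ × N) → ℝ) (hΩ : IsForm2 Ω)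
    (J : Set ((ℝ × N) → (ℝ × N) → ℝ)) (hJ : ∀ α ∈ J, IsForm1 α)
    (Adm : Set ((ℝ × N) → ℝ × N)) (hAdm : ∀ ξ ∈ Adm, ContDiff ℝ ∞ ξ)
    (Z : (ℝ × N) → ℝ × N) (hZ : ContDiff ℝ ∞ Z) :
    (∀ (c : ℝ → ℝ × N) (I : Set ℝ), IsIntCurveOn Z c I →
        ∃ a : ℝ, IsGVPSolution Ω J Adm (fun t => c (t + a)) {t | t + a ∈ I}) ↔
      ((∀ α ∈ J, ∀ x, α x (Z x) = 0) ∧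
        (∀ ξ ∈ Adm, ∀ x, Ω x (ξ x) (Z x) = 0) ∧
        (∀ x, (Z x).1 = 1)) := by
  constructor
  · -- forward direction
    intro H
    have key : ∀ x : ℝ × N, (∀ α ∈ J, α x (Z x) = 0) ∧
        (∀ ξ ∈ Adm, Ω x (ξ x) (Z x) = 0) ∧ (Z x).1 = 1 := by
      intro x
      obtain ⟨c, hc0, ε, hε, hc⟩ :=
        ContDiffAt.exists_forall_mem_closedBall_exists_eq_forall_mem_Ioo_hasDerivAt₀ (f := Z) (x₀ := x)
          (hZ.of_le (by exact_mod_cast le_top)).contDiffAt 0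
      have hint : IsIntCurveOn Z c (Ioo (0 - ε) (0 + ε)) :=
        ⟨isOpen_Ioo, ordConnected_Ioo, ⟨0, by constructor <;> simp [hε]⟩, hc⟩
      obtain ⟨a, hsec, hα, hΩξ⟩ := H c _ hint
      set γ : ℝ → ℝ × N := fun t => c (t + a) with hγ
      have hsmem : -a ∈ {t | t + a ∈ Ioo (0 - ε) (0 + ε)} := by
        simp only [Set.mem_setOf_eq, neg_add_cancel]
        constructor <;> simp [hε]
      have hγderiv : ∀ t ∈ {t | t + a ∈ Ioo (0 - ε) (0 + ε)},
          HasDerivAt γ (Z (c (t + a))) t := by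
        intro t ht
        have := (hc (t + a) ht).scomp t ((hasDerivAt_id t).add_const a)
        simpa [Function.comp_def] using this
      have hγs : γ (-a) = x := by simp [hγ, hc0]
      have hd : deriv γ (-a) = Z x := by
        rw [(hγderiv _ hsmem).deriv, neg_add_cancel, hc0]
      refine ⟨?_, ?_, ?_⟩
      · intro α hαJ
        have := hα α hαJ (-a) hsmem
        rwa [hγs, hd] at this
      · intro ξ hξ
        have := hΩξ ξ hξ (-a) hsmem
        rwa [hγs, hd] at this
      · -- projection condition gives (Z x).1 = 1
        have h1 : HasDerivAt (fun t => (γ t).1) (Z x).1 (-a) := by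
          have := (ContinuousLinearMap.fst ℝ ℝ N).hasFDerivAt.comp_hasDerivAt (-a)
            (hγderiv _ hsmem)
          simpa [hc0, Function.comp_def] using this
        have heq : (fun t => (γ t).1) =ᶠ[nhds (-a)] (fun t => t) := by
          filter_upwards [hsec.isOpen.mem_nhds hsmem] with t ht
          exact hsec.proj t ht
        have h2 : HasDerivAt (fun t : ℝ => t) (Z x).1 (-a) :=
          h1.congr_of_eventuallyEq heq.symm
        exact h2.unique (hasDerivAt_id (-a))
    exact ⟨fun α hα x => (key x).1 α hα, fun ξ hξ x => (key x).2.1 ξ hξ,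
      fun x => (key x).2.2⟩
  · -- backward direction
    rintro ⟨h1, h2, h3⟩ c I ⟨hIopen, hIoc, ⟨t₀, ht₀⟩, hc⟩
    set b : ℝ := (c t₀).1 - t₀ with hb
    -- the function t ↦ (c t).1 - t is constant on I
    have hg : ∀ t ∈ I, HasDerivAt (fun t => (c t).1 - t) 0 t := by
      intro t ht
      have hfst : HasDerivAt (fun t => (c t).1) (Z (c t)).1 t :=
        ((ContinuousLinearMap.fst ℝ ℝ N).hasFDerivAt.comp_hasDerivAt t (hc t ht))
      have := hfst.sub (hasDerivAt_id t)
      rw [h3 (c t)] at this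
      exact this.congr_deriv (by norm_num)
    have hconst : ∀ t ∈ I, (c t).1 - t = b := by
      intro t ht
      have hconv : Convex ℝ I := hIoc.convex
      have hdiff : DifferentiableOn ℝ (fun t => (c t).1 - t) I := fun s hs =>
        (hg s hs).differentiableAt.differentiableWithinAt
      have hfd : ∀ s ∈ I, fderivWithin ℝ (fun t => (c t).1 - t) I s = 0 := by
        intro s hs
        rw [fderivWithin_of_isOpen hIopen hs, (hg s hs).hasFDerivAt.fderiv]
        ext y; simp
      exact hconv.is_const_of_fderivWithin_eq_zero hdiff hfd ht ht₀
    refine ⟨-b, ?_, ?_, ?_⟩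
    · -- IsSection
      have hmem : ∀ t ∈ {t | t + -b ∈ I}, t + -b ∈ I := fun t ht => ht
      refine ⟨?_, ?_, ⟨t₀ + b, by simpa using ht₀⟩, ?_, ?_⟩
      · exact hIopen.preimage (continuous_add_right (-b))
      · exact ⟨fun x hx y hy z hz =>
          hIoc.out' hx hy ⟨add_le_add_left hz.1 _, add_le_add_left hz.2 _⟩⟩
      · have hcs : ContDiffOn ℝ ∞ c I := contDiffOn_of_integralCurve Z hZ hIopen hc
        exact hcs.comp ((contDiff_id.add contDiff_const).contDiffOn) hmem
      · intro t ht
        have := hconst (t + -b) ht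
        show (c (t + -b)).1 = t
        linarith
    · intro α hα t ht
      have hd : HasDerivAt (fun t => c (t + -b)) (Z (c (t + -b))) t := by
        have := (hc (t + -b) ht).scomp t ((hasDerivAt_id t).add_const (-b))
        simpa [Function.comp_def] using this
      rw [hd.deriv]
      exact h1 α hα _
    · intro ξ hξ t ht
      have hd : HasDerivAt (fun t => c (t + -b)) (Z (c (t + -b))) t := by
        have := (hc (t + -b) ht).scomp t ((hasDerivAt_id t).add_const (-b))
        simpa [Function.comp_def] using this
      rw [hd.deriv]
      exact h2 ξ hξ _

end VPGeom
end
end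

section
/- Let E = ℝ × ℝ^{2n} × ℝ with coordinates (t, q^i, p_i, s), let H : E → ℝ be smooth, η = H dt + ds − p_i dq^i, η̂ = ds − p_i dq^i, σ_s = (∂H/∂s) dt, and Ω̄ = dη + σ_s ∧ η. Then a vector field Z on E satisfies i_ZΩ̄ = 0, i_Z dt = 1 and i_Zη = 0 if and only if Z satisfies the cocontact Hamiltonian equations: i_Z dη̂ = dH − (∂H/∂s) η̂ − (∂H/∂t) dt, i_Z η̂ = −H, and i_Z dt = 1. -/
open MeasureTheory Set Finset
open scoped ContDiff

noncomputable section

namespace VPGeom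

/-- `E = ℝ × T*ℝⁿ × ℝ` with coordinates `(t, qⁱ, pᵢ, s)`. -/
abbrev E5 (n : ℕ) := ℝ × (Fin n → ℝ) × (Fin n → ℝ) × ℝ

/-- `η̂ = ds - pᵢ dqⁱ`. -/
def etaHat (n : ℕ) : E5 n → E5 n → ℝ := fun x v =>
  v.2.2.2 - ∑ i, x.2.2.1 i * v.2.1 i

/-- `η = H dt + ds - pᵢ dqⁱ`. -/
def etaH (n : ℕ) (H : E5 n → ℝ) : E5 n → E5 n → ℝ := fun x v =>
  H x * v.1 + etaHat n x v

/-- `σ_s = (∂H/∂s) dt`. -/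
def sigmaS (n : ℕ) (H : E5 n → ℝ) : E5 n → E5 n → ℝ := fun x v =>
  fderiv ℝ H x ((0 : ℝ), (0 : Fin n → ℝ), (0 : Fin n → ℝ), (1 : ℝ)) * v.1

/-- `Ω̄ = dη + σ_s ∧ η`. -/
def OmegaBar5 (n : ℕ) (H : E5 n → ℝ) : E5 n → E5 n → E5 n → ℝ := fun x u v =>
  extd1 (etaH n H) x u v + wedge11 (sigmaS n H) (etaH n H) x u v

/-- Auxiliary linear map: `u ↦ -∑ i, u_p i * v_q i`. -/
def dEtaHatLin (n : ℕ) (v : E5 n) : E5 n →ₗ[ℝ] ℝ where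
  toFun u := -∑ i, u.2.2.1 i * v.2.1 i
  map_add' a b := by
    simp [Prod.snd_add, Pi.add_apply, add_mul, Finset.sum_add_distrib]
    ring
  map_smul' c a := by
    simp [Prod.smul_snd, Pi.smul_apply, smul_eq_mul, Finset.mul_sum, mul_assoc]

lemma hasFDerivAt_etaHat (n : ℕ) (v x : E5 n) :
    HasFDerivAt (fun y => etaHat n y v)
      ((dEtaHatLin n v).toContinuousLinearMap) x := by
  have hfun : (fun y => etaHat n y v) =
      fun y : E5 n => v.2.2.2 + (dEtaHatLin n v).toContinuousLinearMap y := by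
    funext y
    simp only [etaHat, dEtaHatLin, LinearMap.coe_toContinuousLinearMap',
      LinearMap.coe_mk, AddHom.coe_mk]
    ring
  rw [hfun]
  exact ((dEtaHatLin n v).toContinuousLinearMap.hasFDerivAt (x := x)).const_add v.2.2.2

lemma fderiv_etaHat (n : ℕ) (v x u : E5 n) :
    fderiv ℝ (fun y => etaHat n y v) x u = -∑ i, u.2.2.1 i * v.2.1 i := by
  rw [(hasFDerivAt_etaHat n v x).fderiv]
  rfl

lemma fderiv_etaH (n : ℕ) (H : E5 n → ℝ) (hH : ContDiff ℝ ∞ H) (v x u : E5 n) :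
    fderiv ℝ (fun y => etaH n H y v) x u =
      fderiv ℝ H x u * v.1 - ∑ i, u.2.2.1 i * v.2.1 i := by
  have hHd : DifferentiableAt ℝ H x :=
    (hH.differentiable (by simp)).differentiableAt
  have h1 : HasFDerivAt (fun y => H y * v.1) (v.1 • fderiv ℝ H x) x :=
    hHd.hasFDerivAt.mul_const v.1
  have h2 := h1.add (hasFDerivAt_etaHat n v x)
  have h3 : HasFDerivAt (fun y => etaH n H y v)
      (v.1 • fderiv ℝ H x + (dEtaHatLin n v).toContinuousLinearMap) x := h2
  rw [h3.fderiv]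
  simp only [ContinuousLinearMap.add_apply, ContinuousLinearMap.coe_smul',
    Pi.smul_apply, smul_eq_mul, LinearMap.coe_toContinuousLinearMap',
    dEtaHatLin, LinearMap.coe_mk, AddHom.coe_mk]
  ring

/-- A vector field `Z` satisfies `i_Z Ω̄ = 0`, `i_Z dt = 1` and `i_Z η = 0`
iff it satisfies the cocontact Hamiltonian equations
`i_Z dη̂ = dH - (∂H/∂s) η̂ - (∂H/∂t) dt`, `i_Z η̂ = -H`, `i_Z dt = 1`. -/
theorem cocontact_hamiltonian_equations (n : ℕ) (H : E5 n → ℝ) (hH : ContDiff ℝ ∞ H)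
    (Z : E5 n → E5 n) :
    ((∀ x u, OmegaBar5 n H x (Z x) u = 0) ∧ (∀ x, (Z x).1 = 1) ∧
        (∀ x, etaH n H x (Z x) = 0)) ↔
      ((∀ x u, extd1 (etaHat n) x (Z x) u =
          fderiv ℝ H x u
            - fderiv ℝ H x ((0 : ℝ), (0 : Fin n → ℝ), (0 : Fin n → ℝ), (1 : ℝ)) * etaHat n x u
            - fderiv ℝ H x ((1 : ℝ), (0 : Fin n → ℝ), (0 : Fin n → ℝ), (0 : ℝ)) * u.1) ∧
        (∀ x, etaHat n x (Z x) = -H x) ∧ (∀ x, (Z x).1 = 1)) := by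
  have hfd := fderiv_etaH n H hH
  constructor
  · rintro ⟨hΩ, hT, hη⟩
    have heZ : ∀ x, etaHat n x (Z x) = -H x := fun x => by
      have h := hη x
      simp only [etaH, hT x, mul_one] at h
      linarith
    have key : ∀ x, fderiv ℝ H x (Z x) =
        fderiv ℝ H x ((1 : ℝ), (0 : Fin n → ℝ), (0 : Fin n → ℝ), (0 : ℝ)) -
          fderiv ℝ H x ((0 : ℝ), (0 : Fin n → ℝ), (0 : Fin n → ℝ), (1 : ℝ)) * H x := by
      intro x
      have h0 := hΩ x ((1 : ℝ), (0 : Fin n → ℝ), (0 : Fin n → ℝ), (0 : ℝ))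
      simp only [OmegaBar5, extd1, wedge11, sigmaS] at h0
      rw [hfd, hfd] at h0
      simp only [etaH] at h0
      rw [heZ x, hT x] at h0
      simp only [etaHat] at h0
      simp at h0
      simp only [Prod.mk_zero_zero] at h0 ⊢
      linarith
    refine ⟨fun x u => ?_, heZ, hT⟩
    have h0 := hΩ x u
    simp only [OmegaBar5, extd1, wedge11, sigmaS] at h0
    rw [hfd, hfd] at h0
    simp only [etaH] at h0
    rw [heZ x, hT x, key x] at h0
    simp only [extd1, fderiv_etaHat]
    linear_combination h0
  · rintro ⟨hd, heZ, hT⟩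
    have key : ∀ x, fderiv ℝ H x (Z x) =
        fderiv ℝ H x ((1 : ℝ), (0 : Fin n → ℝ), (0 : Fin n → ℝ), (0 : ℝ)) -
          fderiv ℝ H x ((0 : ℝ), (0 : Fin n → ℝ), (0 : Fin n → ℝ), (1 : ℝ)) * H x := by
      intro x
      have h0 := hd x (Z x)
      simp only [extd1, sub_self] at h0
      rw [heZ x, hT x] at h0
      linarith
    refine ⟨fun x u => ?_, hT, fun x => by simp [etaH, hT x, heZ x]⟩
    have h0 := hd x u
    simp only [extd1, fderiv_etaHat] at h0
    simp only [OmegaBar5, extd1, wedge11, sigmaS]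
    rw [hfd, hfd]
    simp only [etaH]
    rw [heZ x, hT x, key x]
    linear_combination h0

end VPGeom
end
end

section
/- Let E = ℝ × ℝⁿ × ℝⁿ with coordinates (t, q^i, v^i), κ^i = dq^i − v^i dt, I₁^{vak} = ⟨κ^1,…,κ^n⟩, L : E → ℝ smooth, Θ_L = L dt + (∂L/∂v^i)κ^i, and Adm = {ξ ∈ 𝔛(E) : i_ξ dt = 0 and ℒ_ξκ^i ∈ I₁^{vak} for all i}. Then the geometric variational problem (dΘ_L, (∅, I₁^{vak}), ⟨Adm⟩^{B(π)}) is dynamically equivalent to the geometric variational problem (dΘ_L, (∅, I₁^{vak}), Γ(V(π))), where Γ(V(π)) is the set of all π-vertical vector fields on E. -/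
open MeasureTheory Set Finset
open scoped ContDiff

noncomputable section

namespace VPGeom

/-- `E = J¹ρ ≅ ℝ × ℝⁿ × ℝⁿ` with coordinates `(t, qⁱ, vⁱ)`. -/
abbrev E8 (n : ℕ) := ℝ × (Fin n → ℝ) × (Fin n → ℝ)

/-- The Cartan 1-forms `κⁱ = dqⁱ - vⁱ dt`. -/
def kap (n : ℕ) (i : Fin n) : E8 n → E8 n → ℝ := fun x w => w.2.1 i - x.2.2 i * w.1

/-- `∂L/∂vⁱ`. -/
def dLv (n : ℕ) (L : E8 n → ℝ) (i : Fin n) : E8 n → ℝ := fun x =>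
  fderiv ℝ L x ((0 : ℝ), (0 : Fin n → ℝ), Pi.single i 1)

/-- The Poincaré–Cartan 1-form `Θ_L = L dt + (∂L/∂vⁱ) κⁱ`. -/
def ThetaL (n : ℕ) (L : E8 n → ℝ) : E8 n → E8 n → ℝ := fun x w =>
  L x * w.1 + ∑ i, dLv n L i x * kap n i x w

end VPGeom
namespace VPGeom

/-- Membership in the `C^∞(E)`-module `I₁ᵛᵃᵏ = ⟨κ¹,…,κⁿ⟩` generated by the Cartan forms. -/
def InKapSpan (n : ℕ) (α : E8 n → E8 n → ℝ) : Prop :=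
  ∃ f : Fin n → E8 n → ℝ, (∀ j, ContDiff ℝ ∞ (f j)) ∧
    ∀ x w, α x w = ∑ j, f j x * kap n j x w

/-- The admissible variations for the vakonomically implemented holonomy constraints:
vertical smooth vector fields `ξ` with `ℒ_ξ κⁱ ∈ I₁ᵛᵃᵏ` for all `i`. -/
def AdmHol (n : ℕ) : Set (E8 n → E8 n) :=
  {ξ | ContDiff ℝ ∞ ξ ∧ (∀ x, (ξ x).1 = 0) ∧ ∀ i, InKapSpan n (lie1 ξ (kap n i))}

/-- `⟨A⟩^{B(π)}`: all finite `B(π)`-linear combinations of elements of `A`. -/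
def BSpan (n : ℕ) (A : Set (E8 n → E8 n)) : Set (E8 n → E8 n) :=
  {ξ | ∃ (m : ℕ) (g : Fin m → ℝ → ℝ) (ζ : Fin m → E8 n → E8 n),
    (∀ j, ContDiff ℝ ∞ (g j)) ∧ (∀ j, ζ j ∈ A) ∧ ξ = fun x => ∑ j, g j x.1 • ζ j x}

/-- The π-vertical smooth vector fields `Γ(V(π))` on `E = J¹ρ`. -/
def VertVF8 (n : ℕ) : Set (E8 n → E8 n) :=
  {ξ | ContDiff ℝ ∞ ξ ∧ ∀ x, (ξ x).1 = 0}

end VPGeom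

namespace VPGeom

/-- Solution sections of a GVP `(Ω, (∅, I₁ᵛᵃᵏ), A)` on `J¹ρ`. -/
def IsGVPSolHol (n : ℕ) (Ω : E8 n → E8 n → E8 n → ℝ) (A : Set (E8 n → E8 n))
    (γ : ℝ → E8 n) (I : Set ℝ) : Prop :=
  IsSection Prod.fst γ I ∧
  (∀ α : E8 n → E8 n → ℝ, InKapSpan n α → ∀ t ∈ I, α (γ t) (deriv γ t) = 0) ∧
  ∀ ξ ∈ A, ∀ t ∈ I, Ω (γ t) (ξ (γ t)) (deriv γ t) = 0


/-- Every `B(π)`-linear combination of admissible fields is a smooth vertical field. -/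
lemma bspan_adm_subset_vert (n : ℕ) : BSpan n (AdmHol n) ⊆ VertVF8 n := by
  rintro ξ ⟨m, g, ζ, hg, hζ, rfl⟩
  refine ⟨ContDiff.sum fun j _ => ((hg j).comp contDiff_fst).smul (hζ j).1, fun x => ?_⟩
  rw [Prod.fst_sum]
  exact Finset.sum_eq_zero fun j _ => by simp [(hζ j).2.1 x]

/-- Any vertical tangent vector at a point is the value of an admissible field. -/
lemma exists_adm_value (n : ℕ) (x₀ : E8 n) (u : E8 n) (hu : u.1 = 0) :
    ∃ ζ ∈ AdmHol n, ζ x₀ = u := by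
  set d : Fin n → ℝ := u.2.2 with hd
  set L : E8 n →L[ℝ] E8 n :=
    (ContinuousLinearMap.fst ℝ ℝ ((Fin n → ℝ) × (Fin n → ℝ))).smulRight
      ((0, d, 0) : E8 n) with hL
  set v₀ : E8 n := (0, u.2.1 - x₀.1 • d, d) with hv₀
  refine ⟨fun x => v₀ + L x, ⟨contDiff_const.add L.contDiff, ?_, ?_⟩, ?_⟩
  · intro x; simp [hv₀, hL, Prod.smul_def]
  · intro i
    refine ⟨fun _ _ => 0, fun _ => contDiff_const, fun x w => ?_⟩
    have hLx : (L x : E8 n) = (x.1 • (0:ℝ), x.1 • d, x.1 • (0 : Fin n → ℝ)) := by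
      simp [hL, Prod.smul_def]
    have hζ' : fderiv ℝ (fun x : E8 n => v₀ + L x) x = L :=
      (L.hasFDerivAt.const_add v₀).fderiv
    set P : E8 n →L[ℝ] ℝ :=
      (ContinuousLinearMap.proj i).comp
        ((ContinuousLinearMap.snd ℝ (Fin n → ℝ) (Fin n → ℝ)).comp
          (ContinuousLinearMap.snd ℝ ℝ ((Fin n → ℝ) × (Fin n → ℝ)))) with hP
    have hkapfun : (fun y : E8 n => kap n i y w) = fun y => w.2.1 i - (w.1 • P) y := by
      funext y; simp [kap, hP, mul_comm]
    have hk : fderiv ℝ (fun y : E8 n => kap n i y w) x = -(w.1 • P) := by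
      rw [hkapfun]; exact ((w.1 • P).hasFDerivAt.const_sub (w.2.1 i)).fderiv
    simp only [lie1, hk, hζ']
    have h1 : ((v₀ + L x : E8 n)).2.2 i = d i := by simp [hv₀, hLx]
    have h2 : kap n i x (L w) = w.1 * d i - x.2.2 i * (w.1 * 0) := by
      simp [kap, hL, Prod.smul_def]
    simp [h1, h2, hLx, hP, Finset.sum_const_zero, hv₀]
  · have : u = (0, u.2.1, u.2.2) := by rw [← hu]
    rw [this]
    ext <;> simp [hv₀, hL, Prod.smul_def, hd]

/-- Admissible fields belong to their own `B(π)`-span. -/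
lemma adm_mem_bspan (n : ℕ) {ζ : E8 n → E8 n} (h : ζ ∈ AdmHol n) :
    ζ ∈ BSpan n (AdmHol n) := by
  refine ⟨1, fun _ => fun _ => 1, fun _ => ζ, fun _ => contDiff_const, fun _ => h, ?_⟩
  funext x; simp

/-- The GVP `(dΘ_L, (∅, I₁ᵛᵃᵏ), ⟨Adm⟩^{B(π)})` is dynamically equivalent to
the GVP `(dΘ_L, (∅, I₁ᵛᵃᵏ), Γ(V(π)))`. -/
theorem admissible_vs_vertical_variations (n : ℕ) (L : E8 n → ℝ) (hL : ContDiff ℝ ∞ L) :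
    ∀ (γ : ℝ → E8 n) (I : Set ℝ),
      IsGVPSolHol n (extd1 (ThetaL n L)) (BSpan n (AdmHol n)) γ I ↔
        IsGVPSolHol n (extd1 (ThetaL n L)) (VertVF8 n) γ I := by
  intro γ I
  constructor
  · rintro ⟨hsec, hcon, hvar⟩
    refine ⟨hsec, hcon, fun ξ hξ t ht => ?_⟩
    obtain ⟨ζ, hζ, hval⟩ := exists_adm_value n (γ t) (ξ (γ t)) (hξ.2 (γ t))
    have h := hvar ζ (adm_mem_bspan n hζ) t ht
    rwa [hval] at h
  · rintro ⟨hsec, hcon, hvar⟩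
    exact ⟨hsec, hcon, fun ξ hξ t ht => hvar ξ (bspan_adm_subset_vert n hξ) t ht⟩


end VPGeom
end
end

section
/- Let E = ℝ × ℝⁿ × ℝⁿ × ℝ^{k+r} with coordinates (t, q^i, v^i, s^α, u^a), κ^i = dq^i − v^i dt, I₁^{vak} = ⟨κ^i⟩, I₁^{nh} = ⟨η¹,…,η^k⟩, I₀ ⊆ C∞(E), and let L : E → ℝ be smooth with Θ_L = L dt + (∂L/∂v^i)κ^i. Assume the constraints are compatible: (1) I₁^{nh} has k generators η^α; (2) τ ∧ η¹ ∧ … ∧ η^k ∧ κ¹ ∧ dκ¹ ∧ … ∧ κⁿ ∧ dκⁿ vanishes nowhere; (3) i_{∂/∂v^i}η^α = 0 for all i, α. Choose vector fields R_α with i_{R_α}τ = 0 and i_{R_α}η^β = δ_α^β, and set σ_α = i_{R_α}dΘ_L and Ω̄ = dΘ_L + σ_α ∧ η^α. Then the geometric variational problem (dΘ_L, (I₀, I₁^{nh}, I₁^{vak}), ⟨Adm⟩^{B(π)}) is dynamically equivalent to the geometric variational problem (Ω̄, (I₀, I₁^{nh}, I₁^{vak}), Γ(V(π))). -/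
open MeasureTheory Set Finset
open scoped ContDiff

noncomputable section

namespace VPGeom

/-- `E = J¹ρ × N ≅ ℝ × ℝⁿ × ℝⁿ × ℝᵏ × ℝʳ` with coordinates `(t, qⁱ, vⁱ, sᵅ, uᵃ)`. -/
abbrev E12 (n k r : ℕ) := ℝ × (Fin n → ℝ) × (Fin n → ℝ) × (Fin k → ℝ) × (Fin r → ℝ)

/-- The Cartan 1-forms `κⁱ = dqⁱ - vⁱ dt` pulled back to `E`. -/
def kap12 (n k r : ℕ) (i : Fin n) : E12 n k r → E12 n k r → ℝ := fun x w =>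
  w.2.1 i - x.2.2.1 i * w.1

/-- `∂L/∂vⁱ`. -/
def dLv12 (n k r : ℕ) (L : E12 n k r → ℝ) (i : Fin n) : E12 n k r → ℝ := fun x =>
  fderiv ℝ L x ((0 : ℝ), (0 : Fin n → ℝ), Pi.single i 1, (0 : Fin k → ℝ), (0 : Fin r → ℝ))

/-- The Poincaré–Cartan 1-form `Θ_L = L dt + (∂L/∂vⁱ) κⁱ`. -/
def ThetaL12 (n k r : ℕ) (L : E12 n k r → ℝ) : E12 n k r → E12 n k r → ℝ := fun x w =>
  L x * w.1 + ∑ i, dLv12 n k r L i x * kap12 n k r i x w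

/-- The constraints `I₁ⁿʰ = ⟨η¹,…,ηᵏ⟩` and `I₁ᵛᵃᵏ = ⟨κ¹,…,κⁿ⟩` are compatible:
the `ηᵅ` number `k`; the wedge `τ ∧ (⋀ηᵅ) ∧ (⋀ κⁱ ∧ dκⁱ)` vanishes nowhere (expressed as the
pointwise linear independence of the covectors `τ, ηᵅ, κⁱ, dvⁱ`, which is the value of that
wedge condition since `dκⁱ = dt ∧ dvⁱ`); and `C ⊆ ⋂ ker ηᵅ`, i.e. `i_{∂/∂vⁱ} ηᵅ = 0`. -/
def CompatibleConstraints (n k r : ℕ) (η : Fin k → E12 n k r → E12 n k r → ℝ) : Prop :=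
  (∀ x : E12 n k r, LinearIndependent ℝ
    (Fin.cons (fun w : E12 n k r => w.1)
      (Fin.append (fun a : Fin k => η a x)
        (Fin.append (fun i : Fin n => kap12 n k r i x)
          (fun i : Fin n => fun w : E12 n k r => w.2.2.1 i))) :
      Fin (k + (n + n) + 1) → E12 n k r → ℝ)) ∧
  (∀ (i : Fin n) (a : Fin k) (x : E12 n k r),
    η a x ((0 : ℝ), (0 : Fin n → ℝ), Pi.single i 1, (0 : Fin k → ℝ), (0 : Fin r → ℝ)) = 0)

/-- Membership in the `C^∞(E)`-module `⟨I₁ᵛᵃᵏ, I₁ⁿʰ⟩` generated by the `κⁱ` and the `ηᵅ`. -/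
def InKapEtaSpan (n k r : ℕ) (η : Fin k → E12 n k r → E12 n k r → ℝ)
    (α : E12 n k r → E12 n k r → ℝ) : Prop :=
  ∃ (f : Fin n → E12 n k r → ℝ) (g : Fin k → E12 n k r → ℝ),
    (∀ j, ContDiff ℝ ∞ (f j)) ∧ (∀ a, ContDiff ℝ ∞ (g a)) ∧
    ∀ x w, α x w = ∑ j, f j x * kap12 n k r j x w + ∑ a, g a x * η a x w

/-- The admissible variations: vertical smooth vector fields `ξ` with `i_ξ ηᵅ ∈ (I₀)` and
`ℒ_ξ κⁱ ∈ ⟨I₁ᵛᵃᵏ, I₁ⁿʰ⟩`. -/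
def Adm12 (n k r : ℕ) (I₀ : Set (E12 n k r → ℝ))
    (η : Fin k → E12 n k r → E12 n k r → ℝ) : Set (E12 n k r → E12 n k r) :=
  {ξ | ContDiff ℝ ∞ ξ ∧ (∀ x, (ξ x).1 = 0) ∧
    (∀ a : Fin k, InIdeal I₀ fun x => η a x (ξ x)) ∧
    ∀ i : Fin n, InKapEtaSpan n k r η (lie1 ξ (kap12 n k r i))}

/-- `⟨A⟩^{B(π)}`: all finite `B(π)`-linear combinations of elements of `A`. -/
def BSpan12 (n k r : ℕ) (A : Set (E12 n k r → E12 n k r)) : Set (E12 n k r → E12 n k r) :=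
  {ξ | ∃ (m : ℕ) (g : Fin m → ℝ → ℝ) (ζ : Fin m → E12 n k r → E12 n k r),
    (∀ j, ContDiff ℝ ∞ (g j)) ∧ (∀ j, ζ j ∈ A) ∧ ξ = fun x => ∑ j, g j x.1 • ζ j x}

/-- The π-vertical smooth vector fields `Γ(V(π))`. -/
def Vert12 (n k r : ℕ) : Set (E12 n k r → E12 n k r) :=
  {ξ | ContDiff ℝ ∞ ξ ∧ ∀ x, (ξ x).1 = 0}

end VPGeom

namespace VPGeom

/-- Solution sections of a GVP `(Ω, (I₀, I₁ⁿʰ, I₁ᵛᵃᵏ), A)`. -/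
def IsGVPSol12 (n k r : ℕ) (Ω : E12 n k r → E12 n k r → E12 n k r → ℝ)
    (I₀ : Set (E12 n k r → ℝ)) (η : Fin k → E12 n k r → E12 n k r → ℝ)
    (A : Set (E12 n k r → E12 n k r)) (γ : ℝ → E12 n k r) (I : Set ℝ) : Prop :=
  IsSection Prod.fst γ I ∧
  (∀ f ∈ I₀, ∀ t ∈ I, f (γ t) = 0) ∧
  (∀ a : Fin k, ∀ t ∈ I, η a (γ t) (deriv γ t) = 0) ∧
  (∀ i : Fin n, ∀ t ∈ I, kap12 n k r i (γ t) (deriv γ t) = 0) ∧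
  ∀ ξ ∈ A, ∀ t ∈ I, Ω (γ t) (ξ (γ t)) (deriv γ t) = 0

section Aux
variable {n k r : ℕ}

def bt : E12 n k r := (1, 0, 0, 0, 0)
def bq (i : Fin n) : E12 n k r := (0, Pi.single i 1, 0, 0, 0)
def bv (i : Fin n) : E12 n k r := (0, 0, Pi.single i 1, 0, 0)
def bs (b : Fin k) : E12 n k r := (0, 0, 0, Pi.single b 1, 0)
def bu (b : Fin r) : E12 n k r := (0, 0, 0, 0, Pi.single b 1)
def bsu : Fin k ⊕ Fin r → E12 n k r := Sum.elim bs bu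

lemma decomp (w : E12 n k r) :
    w = w.1 • bt + (∑ i, w.2.1 i • bq i) + (∑ i, w.2.2.1 i • bv i) +
      (∑ b, w.2.2.2.1 b • bs b) + (∑ b, w.2.2.2.2 b • bu b) := by
  refine Prod.ext ?_ (Prod.ext ?_ (Prod.ext ?_ (Prod.ext ?_ ?_))) <;>
    simp [bt, bq, bv, bs, bu, Prod.fst_sum, Prod.snd_sum] <;>
    funext j <;>
    simp [Finset.sum_apply, Pi.single_apply, mul_ite]

lemma lin_eval {φ : E12 n k r → ℝ} (hφ : IsLinearMap ℝ φ) (w : E12 n k r) :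
    φ w = w.1 * φ bt + (∑ i, w.2.1 i * φ (bq i)) + (∑ i, w.2.2.1 i * φ (bv i)) +
      (∑ b, w.2.2.2.1 b * φ (bs b)) + (∑ b, w.2.2.2.2 b * φ (bu b)) := by
  have hψ : φ = ⇑(IsLinearMap.mk' φ hφ) := rfl
  conv_lhs => rw [decomp w, hψ]
  simp [map_add, map_sum, _root_.map_smul]

lemma rows_indep {η : Fin k → E12 n k r → E12 n k r → ℝ}
    (hη : ∀ a, IsForm1 (η a)) (hcompat : CompatibleConstraints n k r η)
    (x : E12 n k r) (c : Fin k → ℝ)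
    (h : ∀ j : Fin k ⊕ Fin r, (∑ a, c a * η a x (bsu j)) = 0) : ∀ a, c a = 0 := by
  set φ : E12 n k r → ℝ := fun w => ∑ a, c a * η a x w with hφdef
  have hφ : IsLinearMap ℝ φ := by
    constructor
    · intro w w'
      simp only [hφdef, ((hη _).2 x).map_add, mul_add, Finset.sum_add_distrib]
    · intro s w
      simp only [hφdef, ((hη _).2 x).map_smul, smul_eq_mul, Finset.mul_sum]
      exact Finset.sum_congr rfl fun a _ => by ring
  have hφv : ∀ i, φ (bv i) = 0 := by
    intro i
    simp only [hφdef]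
    refine Finset.sum_eq_zero fun a _ => ?_
    have := hcompat.2 i a x
    rw [show (bv i : E12 n k r) = ((0 : ℝ), (0 : Fin n → ℝ), Pi.single i 1,
      (0 : Fin k → ℝ), (0 : Fin r → ℝ)) from rfl, this, mul_zero]
  have hφs : ∀ b : Fin k, φ (bs b) = 0 := fun b => h (Sum.inl b)
  have hφu : ∀ b : Fin r, φ (bu b) = 0 := fun b => h (Sum.inr b)
  have key : ∀ w : E12 n k r, φ w = w.1 * φ bt + ∑ i, w.2.1 i * φ (bq i) := by
    intro w
    rw [lin_eval hφ w]
    simp [hφv, hφs, hφu]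
  -- build the vanishing linear combination
  set g : Fin (k + (n + n) + 1) → ℝ :=
    Fin.cons (-(φ bt) - ∑ i, φ (bq i) * x.2.2.1 i)
      (Fin.append c (Fin.append (fun i => -(φ (bq i))) 0)) with hgdef
  have hsum : ∑ j, g j •
      (Fin.cons (fun w : E12 n k r => w.1)
        (Fin.append (fun a : Fin k => η a x)
          (Fin.append (fun i : Fin n => kap12 n k r i x)
            (fun i : Fin n => fun w : E12 n k r => w.2.2.1 i))) :
        Fin (k + (n + n) + 1) → E12 n k r → ℝ) j = 0 := by
    funext w
    rw [Finset.sum_apply]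
    rw [Fin.sum_univ_succ]
    simp only [Fin.cons_zero, Fin.cons_succ, hgdef]
    rw [Fin.sum_univ_add]
    simp only [Fin.append_left, Fin.append_right]
    rw [Fin.sum_univ_add]
    simp only [Fin.append_left, Fin.append_right]
    simp only [Pi.smul_apply, smul_eq_mul, Pi.zero_apply, zero_mul, Finset.sum_const_zero,
      add_zero, kap12]
    have hk : ∑ a, c a * η a x w = w.1 * φ bt + ∑ i, w.2.1 i * φ (bq i) := key w
    rw [hk]
    have h3 : ∑ i, (-(φ (bq i))) * (w.2.1 i - x.2.2.1 i * w.1)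
        = -(∑ i, w.2.1 i * φ (bq i)) + (∑ i, φ (bq i) * x.2.2.1 i) * w.1 := by
      rw [Finset.sum_mul, ← Finset.sum_neg_distrib, ← Finset.sum_add_distrib]
      exact Finset.sum_congr rfl fun i _ => by ring
    rw [h3]
    ring
  have hz := Fintype.linearIndependent_iff.mp (hcompat.1 x) g hsum
  intro a
  have := hz (Fin.succ (Fin.castAdd (n + n) a))
  simpa [hgdef, Fin.cons_succ, Fin.append_left] using this


end Aux

section Aux2
variable {n k r : ℕ}

/-- smoothness of finite products -/
lemma contDiff_finset_prod {E : Type*} [NormedAddCommGroup E] [NormedSpace ℝ E]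
    {ι : Type*} (s : Finset ι) {f : ι → E → ℝ}
    (h : ∀ i ∈ s, ContDiff ℝ ∞ (f i)) :
    ContDiff ℝ ∞ (fun x => ∏ i ∈ s, f i x) := by
  classical
  induction s using Finset.induction with
  | empty => simpa using contDiff_const
  | @insert a s' hni ih =>
      simp only [Finset.prod_insert hni]
      exact (h a (Finset.mem_insert_self a s')).mul
        (ih fun i hi => h i (Finset.mem_insert_of_mem hi))

lemma contDiff_det {E : Type*} [NormedAddCommGroup E] [NormedSpace ℝ E]
    {ι : Type*} [Fintype ι] [DecidableEq ι] {F : E → Matrix ι ι ℝ}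
    (hF : ∀ a b, ContDiff ℝ ∞ (fun x => F x a b)) :
    ContDiff ℝ ∞ (fun x => (F x).det) := by
  simp only [Matrix.det_apply]
  apply ContDiff.sum
  intro σ _
  have : (fun x => Equiv.Perm.sign σ • ∏ i, F x (σ i) i)
      = fun x => ((Equiv.Perm.sign σ : ℤ) : ℝ) * ∏ i, F x (σ i) i := by
    funext x; rw [Units.smul_def, zsmul_eq_mul]
  rw [this]
  exact contDiff_const.mul (contDiff_finset_prod _ fun i _ => hF (σ i) i)

/-- the projection onto the i-th `v` coordinate as a continuous linear map -/
def vproj (n k r : ℕ) (i : Fin n) : E12 n k r →L[ℝ] ℝ :=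
  ((ContinuousLinearMap.proj i : (Fin n → ℝ) →L[ℝ] ℝ)).comp
    ((ContinuousLinearMap.fst ℝ (Fin n → ℝ) ((Fin k → ℝ) × (Fin r → ℝ))).comp
      ((ContinuousLinearMap.snd ℝ (Fin n → ℝ)
          ((Fin n → ℝ) × (Fin k → ℝ) × (Fin r → ℝ))).comp
        (ContinuousLinearMap.snd ℝ ℝ
          ((Fin n → ℝ) × (Fin n → ℝ) × (Fin k → ℝ) × (Fin r → ℝ)))))

lemma vproj_apply (i : Fin n) (e : E12 n k r) : vproj n k r i e = e.2.2.1 i := rfl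

lemma hasFDerivAt_kap (i : Fin n) (x w : E12 n k r) :
    HasFDerivAt (fun y => kap12 n k r i y w) (-(w.1 • vproj n k r i)) x := by
  have h1 : HasFDerivAt (fun _ : E12 n k r => w.2.1 i) (0 : E12 n k r →L[ℝ] ℝ) x :=
    hasFDerivAt_const _ _
  have h2 : HasFDerivAt (fun y : E12 n k r => y.2.2.1 i * w.1)
      (w.1 • vproj n k r i) x := by
    exact (vproj n k r i).hasFDerivAt.mul_const w.1
  have h3 := h1.sub h2
  rw [zero_sub] at h3
  exact h3

lemma fderiv_kap (i : Fin n) (x w e : E12 n k r) :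
    fderiv ℝ (fun y => kap12 n k r i y w) x e = -(e.2.2.1 i * w.1) := by
  rw [(hasFDerivAt_kap i x w).fderiv]
  simp [vproj_apply, mul_comm]

end Aux2

section Adm
variable {n k r : ℕ}

open Matrix in
lemma exists_adm_field {η : Fin k → E12 n k r → E12 n k r → ℝ}
    (hη : ∀ a, IsForm1 (η a)) (hcompat : CompatibleConstraints n k r η)
    (I₀ : Set (E12 n k r → ℝ)) (x₀ : E12 n k r) (u : E12 n k r)
    (hu1 : u.1 = 0) (huη : ∀ a, η a x₀ u = 0) :
    ∃ ζ : E12 n k r → E12 n k r, ζ ∈ Adm12 n k r I₀ η ∧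
      ζ x₀ = ((0 : ℝ), u.2.1, (0 : Fin n → ℝ), u.2.2.2.1, u.2.2.2.2) := by
  classical
  -- linearity of each η a x
  have hlin : ∀ a (x : E12 n k r), IsLinearMap ℝ (η a x) := fun a x => (hη a).2 x
  -- smoothness of x ↦ η a x e for fixed e
  have hsm : ∀ (a) (e : E12 n k r), ContDiff ℝ ∞ (fun x => η a x e) := by
    intro a e
    exact (hη a).1.comp (contDiff_id.prodMk contDiff_const)
  set A : E12 n k r → Matrix (Fin k) (Fin k ⊕ Fin r) ℝ :=
    fun x => Matrix.of fun a c => η a x (bsu c) with hA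
  set bb : E12 n k r → Fin k → ℝ := fun x a => η a x ((0 : ℝ), u.2.1, 0, 0, 0) with hbb
  set δ : Fin k ⊕ Fin r → ℝ := Sum.elim u.2.2.2.1 u.2.2.2.2 with hδ
  set M : E12 n k r → Matrix (Fin k) (Fin k) ℝ := fun x => A x * (A x)ᵀ with hM
  -- invertibility of M x
  have hMdet : ∀ x, IsUnit (M x).det := by
    intro x
    rw [isUnit_iff_ne_zero]
    intro h0
    obtain ⟨v, hv, hMv⟩ := (Matrix.exists_mulVec_eq_zero_iff).mpr h0
    have hd : (v ᵥ* A x) ⬝ᵥ (v ᵥ* A x) = 0 := by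
      have : v ⬝ᵥ (M x) *ᵥ v = 0 := by rw [hMv, dotProduct_zero]
      rwa [hM, ← Matrix.mulVec_mulVec, Matrix.dotProduct_mulVec,
        Matrix.mulVec_transpose] at this
    have hz : ∀ j, (v ᵥ* A x) j = 0 := by
      intro j
      have h1 : ∑ j, (v ᵥ* A x) j * (v ᵥ* A x) j = 0 := hd
      have := (Finset.sum_eq_zero_iff_of_nonneg
        (fun j _ => mul_self_nonneg ((v ᵥ* A x) j))).mp h1 j (Finset.mem_univ j)
      exact mul_self_eq_zero.mp this
    apply hv
    funext a
    refine rows_indep hη hcompat x v (fun j => ?_) a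
    have := hz j
    simpa [Matrix.vecMul, dotProduct, hA] using this
  set σf : E12 n k r → (Fin k ⊕ Fin r → ℝ) :=
    fun x => δ + (A x)ᵀ *ᵥ ((M x)⁻¹ *ᵥ (-(bb x) - A x *ᵥ δ)) with hσ
  set ζ : E12 n k r → E12 n k r :=
    fun x => ((0 : ℝ), u.2.1, (0 : Fin n → ℝ),
      (fun b => σf x (Sum.inl b)), (fun b => σf x (Sum.inr b))) with hζ
  -- A x *ᵥ σf x = -(bb x)
  have hAσ : ∀ x, A x *ᵥ σf x = -(bb x) := by
    intro x
    rw [hσ]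
    simp only [Matrix.mulVec_add, Matrix.mulVec_mulVec]
    rw [← Matrix.mul_assoc, show A x * (A x)ᵀ = M x from rfl,
      Matrix.mul_nonsing_inv _ (hMdet x), Matrix.one_mulVec]
    abel
  -- values of η on ζ
  have hbb_eval : ∀ a x, bb x a = ∑ i, u.2.1 i * η a x (bq i) := by
    intro a x
    rw [hbb]
    simp only
    rw [lin_eval (hlin a x) ((0 : ℝ), u.2.1, 0, 0, 0)]
    simp
  have hAv : ∀ a x (y : Fin k ⊕ Fin r → ℝ), (A x *ᵥ y) a
      = (∑ b, y (Sum.inl b) * η a x (bs b)) + (∑ b, y (Sum.inr b) * η a x (bu b)) := by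
    intro a x y
    simp only [Matrix.mulVec, dotProduct, hA, Matrix.of_apply]
    rw [Fintype.sum_sum_type]
    simp [bsu, mul_comm]
  have hηζ : ∀ a x, η a x (ζ x) = 0 := by
    intro a x
    rw [hζ]
    simp only
    rw [lin_eval (hlin a x)]
    simp only [zero_mul, Pi.zero_apply, mul_zero, Finset.sum_const_zero, zero_add, add_zero]
    have : (∑ b, σf x (Sum.inl b) * η a x (bs b)) + (∑ b, σf x (Sum.inr b) * η a x (bu b))
        = (A x *ᵥ σf x) a := (hAv a x (σf x)).symm
    rw [add_assoc, this, hAσ x, ← hbb_eval a x]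
    simp
  -- value at x₀
  have hζx₀ : ζ x₀ = ((0 : ℝ), u.2.1, (0 : Fin n → ℝ), u.2.2.2.1, u.2.2.2.2) := by
    have hzero : -(bb x₀) - A x₀ *ᵥ δ = 0 := by
      funext a
      have hu' : η a x₀ u = bb x₀ a + (A x₀ *ᵥ δ) a := by
        rw [lin_eval (hlin a x₀) u, hbb_eval a x₀, hAv a x₀ δ]
        have hv0 : ∀ i, η a x₀ (bv i) = 0 := fun i => hcompat.2 i a x₀
        simp [hu1, hv0, hδ]
        ring
      have := huη a
      rw [hu'] at this
      simp only [Pi.sub_apply, Pi.neg_apply, Pi.zero_apply]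
      linarith
    have : σf x₀ = δ := by
      rw [hσ]
      simp only [hzero, Matrix.mulVec_zero, add_zero]
    rw [hζ]
    simp only [this, hδ]
    rfl
  -- smoothness infrastructure
  have hAsm : ∀ a c, ContDiff ℝ ∞ (fun x => A x a c) := fun a c => hsm a (bsu c)
  have hbsm : ∀ a, ContDiff ℝ ∞ (fun x => bb x a) := fun a => hsm a _
  have hMsm : ∀ a b, ContDiff ℝ ∞ (fun x => M x a b) := by
    intro a b
    have : (fun x => M x a b) = fun x => ∑ c, A x a c * A x b c := by
      funext x; simp [hM, Matrix.mul_apply, Matrix.transpose_apply]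
    rw [this]
    exact ContDiff.sum fun c _ => (hAsm a c).mul (hAsm b c)
  have hdetne : ∀ x, (M x).det ≠ 0 := fun x => (isUnit_iff_ne_zero.mp (hMdet x))
  have hdetsm' : ContDiff ℝ ∞ (fun x => (M x).det) := contDiff_det hMsm
  have hadjsm : ∀ a b, ContDiff ℝ ∞ (fun x => (M x).adjugate a b) := by
    intro a b
    have : (fun x => (M x).adjugate a b)
        = fun x => ((M x).updateRow b (Pi.single a 1)).det := by
      funext x; rw [Matrix.adjugate_apply]
    rw [this]
    refine contDiff_det fun c d => ?_
    by_cases hcb : c = b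
    · subst hcb
      simp only [Matrix.updateRow_self]
      exact contDiff_const
    · simp only [Matrix.updateRow_apply, if_neg hcb]
      exact hMsm c d
  have hinvsm : ∀ a b, ContDiff ℝ ∞ (fun x => (M x)⁻¹ a b) := by
    intro a b
    have : (fun x => (M x)⁻¹ a b) = fun x => ((M x).det)⁻¹ * (M x).adjugate a b := by
      funext x
      rw [Matrix.inv_def]
      simp [Ring.inverse_eq_inv']
    rw [this]
    exact (ContDiff.inv hdetsm' hdetne).mul (hadjsm a b)
  have hσsm : ∀ c, ContDiff ℝ ∞ (fun x => σf x c) := by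
    intro c
    have : (fun x => σf x c) = fun x =>
        δ c + ∑ a, (∑ b, A x b c * (M x)⁻¹ b a) *
          (-(bb x a) - (∑ e, A x a (Sum.inl e) * u.2.2.2.1 e
            + ∑ e, A x a (Sum.inr e) * u.2.2.2.2 e)) := by
      funext x
      simp [hσ, Matrix.mulVec, dotProduct, Matrix.mul_apply,
        Matrix.transpose_apply, Fintype.sum_sum_type, hδ]
    rw [this]
    exact contDiff_const.add (ContDiff.sum fun a _ =>
      ((ContDiff.sum fun b _ => (hAsm b c).mul (hinvsm b a)).mul
        (((hbsm a).neg).sub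
          ((ContDiff.sum fun e _ => (hAsm a (Sum.inl e)).mul contDiff_const).add
            (ContDiff.sum fun e _ => (hAsm a (Sum.inr e)).mul contDiff_const)))))
  set su : E12 n k r → (Fin k → ℝ) × (Fin r → ℝ) :=
    fun x => ((fun b => σf x (Sum.inl b)), (fun b => σf x (Sum.inr b))) with hsu
  have hsusm : ContDiff ℝ ∞ su := by
    rw [hsu]
    exact ContDiff.prodMk (contDiff_pi.mpr fun b => hσsm (Sum.inl b))
      (contDiff_pi.mpr fun b => hσsm (Sum.inr b))
  refine ⟨ζ, ⟨?_, ?_, ?_, ?_⟩, hζx₀⟩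
  · -- smoothness
    rw [hζ]
    exact contDiff_const.prodMk (contDiff_const.prodMk (contDiff_const.prodMk hsusm))
  · intro x; rw [hζ]
  · intro a
    exact ⟨0, Fin.elim0, Fin.elim0, (fun j => j.elim0), (fun j => j.elim0),
      by funext x; simp [hηζ a x]⟩
  · intro i
    refine ⟨fun _ => 0, fun _ => 0, fun _ => contDiff_const, fun _ => contDiff_const, ?_⟩
    intro x w
    simp only [zero_mul, Finset.sum_const_zero, add_zero]
    -- lie1 ζ (kap12 i) = 0
    have hsud : HasFDerivAt su (fderiv ℝ su x) x :=
      ((hsusm.differentiable (by simp)) x).hasFDerivAt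
    have hζd : HasFDerivAt ζ
        ((0 : E12 n k r →L[ℝ] ℝ).prod ((0 : E12 n k r →L[ℝ] (Fin n → ℝ)).prod
          ((0 : E12 n k r →L[ℝ] (Fin n → ℝ)).prod (fderiv ℝ su x)))) x := by
      exact HasFDerivAt.prodMk (hasFDerivAt_const _ _) (HasFDerivAt.prodMk (hasFDerivAt_const _ _)
        (HasFDerivAt.prodMk (hasFDerivAt_const _ _) hsud))
    rw [lie1, fderiv_kap, hζd.fderiv]
    simp [kap12, ContinuousLinearMap.prod_apply, hζ]


end Adm

section Theta
variable {n k r : ℕ}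

variable {L : E12 n k r → ℝ}

lemma contDiff_dLv (hL : ContDiff ℝ ∞ L) (i : Fin n) :
    ContDiff ℝ ∞ (dLv12 n k r L i) := by
  have : dLv12 n k r L i = fun x =>
      (ContinuousLinearMap.apply ℝ ℝ (bv i : E12 n k r)) (fderiv ℝ L x) := rfl
  rw [this]
  exact (ContinuousLinearMap.apply ℝ ℝ (bv i : E12 n k r)).contDiff.comp
    ((contDiff_infty_iff_fderiv.mp hL).2)

lemma fderiv_Theta (hL : ContDiff ℝ ∞ L) (x w e : E12 n k r) :
    fderiv ℝ (fun y => ThetaL12 n k r L y w) x e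
      = fderiv ℝ L x e * w.1
        + ∑ i, (fderiv ℝ (dLv12 n k r L i) x e * kap12 n k r i x w
            - dLv12 n k r L i x * (e.2.2.1 i * w.1)) := by
  have hLd : HasFDerivAt L (fderiv ℝ L x) x :=
    ((hL.differentiable (by simp)) x).hasFDerivAt
  have h1 : HasFDerivAt (fun y => L y * w.1) (w.1 • fderiv ℝ L x) x :=
    hLd.mul_const w.1
  have hterm : ∀ i : Fin n, HasFDerivAt (fun y => dLv12 n k r L i y * kap12 n k r i y w)
      (dLv12 n k r L i x • (-(w.1 • vproj n k r i))
        + kap12 n k r i x w • fderiv ℝ (dLv12 n k r L i) x) x := by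
    intro i
    have hpd : HasFDerivAt (dLv12 n k r L i) (fderiv ℝ (dLv12 n k r L i) x) x :=
      (((contDiff_dLv hL i).differentiable (by simp)) x).hasFDerivAt
    exact hpd.mul (hasFDerivAt_kap i x w)
  have hsum : HasFDerivAt (fun y => ∑ i, dLv12 n k r L i y * kap12 n k r i y w)
      (∑ i, (dLv12 n k r L i x • (-(w.1 • vproj n k r i))
        + kap12 n k r i x w • fderiv ℝ (dLv12 n k r L i) x)) x :=
    HasFDerivAt.fun_sum fun i _ => hterm i
  have htot := h1.fun_add hsum
  have : (fun y => L y * w.1 + ∑ i, dLv12 n k r L i y * kap12 n k r i y w)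
      = fun y => ThetaL12 n k r L y w := rfl
  rw [this] at htot
  rw [htot.fderiv]
  simp only [ContinuousLinearMap.add_apply, ContinuousLinearMap.smul_apply,
    ContinuousLinearMap.sum_apply, ContinuousLinearMap.neg_apply, vproj_apply,
    smul_eq_mul]
  have hsum2 : ∑ i, (dLv12 n k r L i x * -(w.1 * e.2.2.1 i)
        + kap12 n k r i x w * fderiv ℝ (dLv12 n k r L i) x e)
      = ∑ i, (fderiv ℝ (dLv12 n k r L i) x e * kap12 n k r i x w
        - dLv12 n k r L i x * (e.2.2.1 i * w.1)) :=
    Finset.sum_congr rfl fun i _ => by ring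
  rw [hsum2, mul_comm w.1 (fderiv ℝ L x e)]

/-- the coordinate formula for dΘ_L -/
def Dform (n k r : ℕ) (L : E12 n k r → ℝ) : E12 n k r → E12 n k r → E12 n k r → ℝ :=
  fun x u w =>
    fderiv ℝ L x u * w.1 - fderiv ℝ L x w * u.1
    + ∑ i, (fderiv ℝ (dLv12 n k r L i) x u * kap12 n k r i x w
        - fderiv ℝ (dLv12 n k r L i) x w * kap12 n k r i x u)
    + ∑ i, dLv12 n k r L i x * (u.1 * w.2.2.1 i - w.1 * u.2.2.1 i)

lemma extd1_Theta (hL : ContDiff ℝ ∞ L) (x u w : E12 n k r) :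
    extd1 (ThetaL12 n k r L) x u w = Dform n k r L x u w := by
  rw [extd1, fderiv_Theta hL x w u, fderiv_Theta hL x u w, Dform]
  rw [add_sub_add_comm, ← Finset.sum_sub_distrib]
  have hs : ∑ i, ((fderiv ℝ (dLv12 n k r L i) x u * kap12 n k r i x w
        - dLv12 n k r L i x * (u.2.2.1 i * w.1))
      - (fderiv ℝ (dLv12 n k r L i) x w * kap12 n k r i x u
        - dLv12 n k r L i x * (w.2.2.1 i * u.1)))
      = ∑ i, ((fderiv ℝ (dLv12 n k r L i) x u * kap12 n k r i x w
          - fderiv ℝ (dLv12 n k r L i) x w * kap12 n k r i x u)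
        + dLv12 n k r L i x * (u.1 * w.2.2.1 i - w.1 * u.2.2.1 i)) :=
    Finset.sum_congr rfl fun i _ => by ring
  rw [Finset.sum_add_distrib] at hs
  rw [hs]
  ring


lemma kap_add (i : Fin n) (x u v : E12 n k r) :
    kap12 n k r i x (u + v) = kap12 n k r i x u + kap12 n k r i x v := by
  simp only [kap12]
  have e1 : ((u + v).1 : ℝ) = u.1 + v.1 := rfl
  have e2 : (u + v).2.1 i = u.2.1 i + v.2.1 i := rfl
  rw [e1, e2]; ring

lemma kap_smul (i : Fin n) (c : ℝ) (x u : E12 n k r) :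
    kap12 n k r i x (c • u) = c * kap12 n k r i x u := by
  simp only [kap12]
  have e1 : ((c • u).1 : ℝ) = c * u.1 := rfl
  have e2 : (c • u).2.1 i = c * u.2.1 i := rfl
  rw [e1, e2]; ring

lemma Dform_linear (x w : E12 n k r) :
    IsLinearMap ℝ (fun u : E12 n k r => Dform n k r L x u w) := by
  constructor
  · intro u v
    have e1 : ((u + v).1 : ℝ) = u.1 + v.1 := rfl
    have e3 : ∀ i, (u + v).2.2.1 i = u.2.2.1 i + v.2.2.1 i := fun _ => rfl
    have h1 : ∑ i, (fderiv ℝ (dLv12 n k r L i) x (u + v) * kap12 n k r i x w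
          - fderiv ℝ (dLv12 n k r L i) x w * kap12 n k r i x (u + v))
        = ∑ i, ((fderiv ℝ (dLv12 n k r L i) x u * kap12 n k r i x w
          - fderiv ℝ (dLv12 n k r L i) x w * kap12 n k r i x u)
          + (fderiv ℝ (dLv12 n k r L i) x v * kap12 n k r i x w
          - fderiv ℝ (dLv12 n k r L i) x w * kap12 n k r i x v)) :=
      Finset.sum_congr rfl fun i _ => by rw [map_add, kap_add]; ring
    have h2 : ∑ i, dLv12 n k r L i x * ((u + v).1 * w.2.2.1 i - w.1 * (u + v).2.2.1 i)
        = ∑ i, (dLv12 n k r L i x * (u.1 * w.2.2.1 i - w.1 * u.2.2.1 i)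
          + dLv12 n k r L i x * (v.1 * w.2.2.1 i - w.1 * v.2.2.1 i)) :=
      Finset.sum_congr rfl fun i _ => by rw [e1, e3]; ring
    simp only [Dform]
    rw [h1, h2, map_add, e1, Finset.sum_add_distrib, Finset.sum_add_distrib]
    ring
  · intro c u
    have e1 : ((c • u).1 : ℝ) = c * u.1 := rfl
    have e3 : ∀ i, (c • u).2.2.1 i = c * u.2.2.1 i := fun _ => rfl
    have h1 : ∑ i, (fderiv ℝ (dLv12 n k r L i) x (c • u) * kap12 n k r i x w
          - fderiv ℝ (dLv12 n k r L i) x w * kap12 n k r i x (c • u))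
        = ∑ i, (c * (fderiv ℝ (dLv12 n k r L i) x u * kap12 n k r i x w
          - fderiv ℝ (dLv12 n k r L i) x w * kap12 n k r i x u)) :=
      Finset.sum_congr rfl fun i _ => by
        rw [_root_.map_smul, kap_smul]; simp only [smul_eq_mul]; ring
    have h2 : ∑ i, dLv12 n k r L i x * ((c • u).1 * w.2.2.1 i - w.1 * (c • u).2.2.1 i)
        = ∑ i, (c * (dLv12 n k r L i x * (u.1 * w.2.2.1 i - w.1 * u.2.2.1 i))) :=
      Finset.sum_congr rfl fun i _ => by rw [e1, e3]; ring
    simp only [Dform, smul_eq_mul]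
    rw [h1, h2, _root_.map_smul, e1, ← Finset.mul_sum, ← Finset.mul_sum]
    simp only [smul_eq_mul]
    ring

lemma lin_comb_eval {φ : E12 n k r → ℝ} (hφ : IsLinearMap ℝ φ) {m : ℕ}
    (c : Fin m → ℝ) (y : Fin m → E12 n k r) (z z' : E12 n k r) (hz : z = z' + ∑ a, c a • y a) :
    φ z = φ z' + ∑ a, c a * φ (y a) := by
  have hψ : φ = ⇑(IsLinearMap.mk' φ hφ) := rfl
  rw [hz, hψ]
  simp [map_add, map_sum, _root_.map_smul]

lemma Dform_purev (x w : E12 n k r) (e : Fin n → ℝ)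
    (hw : ∀ i, kap12 n k r i x w = 0) :
    Dform n k r L x ((0 : ℝ), (0 : Fin n → ℝ), e, (0 : Fin k → ℝ), (0 : Fin r → ℝ)) w
      = 0 := by
  set m : E12 n k r := ((0 : ℝ), (0 : Fin n → ℝ), e, 0, 0) with hmdef
  have hm : m = ∑ i, e i • bv i := by
    have := decomp m
    simpa [hmdef] using this
  have hdL : fderiv ℝ L x m = ∑ i, e i * dLv12 n k r L i x := by
    rw [hm, map_sum]
    exact Finset.sum_congr rfl fun i _ => by rw [_root_.map_smul]; rfl
  have hκm : ∀ i, kap12 n k r i x m = 0 := by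
    intro i; simp [kap12, hmdef]
  have hmv : ∀ i, m.2.2.1 i = e i := fun _ => rfl
  have hm1 : (m.1 : ℝ) = 0 := rfl
  simp only [Dform, ← hmdef, hdL, hm1, hκm, hw, mul_zero, zero_mul, sub_zero, zero_sub,
    mul_neg, Finset.sum_const_zero, add_zero, zero_add]
  rw [Finset.sum_mul, ← Finset.sum_add_distrib]
  exact Finset.sum_eq_zero fun i _ => by ring

end Theta

/-- For compatible constraints, with `σ_α = i_{R_α} dΘ_L` and
`Ω̄ = dΘ_L + σ_α ∧ ηᵅ`, the GVP `(dΘ_L, (I₀, I₁ⁿʰ, I₁ᵛᵃᵏ), ⟨Adm⟩^{B(π)})` is dynamically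
equivalent to the GVP `(Ω̄, (I₀, I₁ⁿʰ, I₁ᵛᵃᵏ), Γ(V(π)))`. -/
theorem mixed_constraints_reduction (n k r : ℕ) (L : E12 n k r → ℝ)
    (hL : ContDiff ℝ ∞ L)
    (I₀ : Set (E12 n k r → ℝ)) (hI₀ : ∀ f ∈ I₀, ContDiff ℝ ∞ f)
    (η : Fin k → E12 n k r → E12 n k r → ℝ) (hη : ∀ a, IsForm1 (η a))
    (hcompat : CompatibleConstraints n k r η)
    (R : Fin k → E12 n k r → E12 n k r) (hR : ∀ a, ContDiff ℝ ∞ (R a))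
    (hRτ : ∀ a x, (R a x).1 = 0)
    (hRη : ∀ a b x, η b x (R a x) = if a = b then 1 else 0)
    (OmgBar : E12 n k r → E12 n k r → E12 n k r → ℝ)
    (hOmgBar : ∀ x u v, OmgBar x u v = extd1 (ThetaL12 n k r L) x u v +
      ∑ a, wedge11 (iota2 (R a) (extd1 (ThetaL12 n k r L))) (η a) x u v) :
    ∀ (γ : ℝ → E12 n k r) (I : Set ℝ),
      IsGVPSol12 n k r (extd1 (ThetaL12 n k r L)) I₀ η
          (BSpan12 n k r (Adm12 n k r I₀ η)) γ I ↔
        IsGVPSol12 n k r OmgBar I₀ η (Vert12 n k r) γ I := by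
  intro γ I
  constructor
  · rintro ⟨hsec, hI₀c, hηc, hκc, hvar⟩
    refine ⟨hsec, hI₀c, hηc, hκc, ?_⟩
    intro ξ hξ t ht
    set x₀ := γ t with hx₀
    set w := deriv γ t with hw
    set u := ξ x₀ with hu
    have hu1 : u.1 = 0 := hξ.2 x₀
    set c : Fin k → ℝ := fun a => η a x₀ u with hc
    set ut : E12 n k r := u - ∑ a, c a • R a x₀ with hut
    have hut1 : ut.1 = 0 := by
      have h1 : ut.1 = u.1 - (∑ a, c a • R a x₀).1 := rfl
      rw [h1, hu1, Prod.fst_sum]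
      have : ∀ a : Fin k, (c a • R a x₀).1 = 0 := by
        intro a
        have : (c a • R a x₀).1 = c a * (R a x₀).1 := rfl
        rw [this, hRτ, mul_zero]
      simp [this]
    have hudecomp0 : u = ut + ∑ a, c a • R a x₀ := (sub_add_cancel _ _).symm
    have hηut : ∀ b, η b x₀ ut = 0 := by
      intro b
      have hb := lin_comb_eval ((hη b).2 x₀) c (fun a => R a x₀) u ut hudecomp0
      have hsum : ∑ a, c a * η b x₀ (R a x₀) = c b := by
        have : ∀ a : Fin k, c a * η b x₀ (R a x₀) = if a = b then c a else 0 := by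
          intro a
          rw [hRη a b x₀]
          by_cases hab : a = b <;> simp [hab]
        rw [Finset.sum_congr rfl fun a _ => this a, Finset.sum_ite_eq']
        simp
      rw [hsum] at hb
      have : c b = η b x₀ ut + c b := hb
      linarith
    have hκw : ∀ i, kap12 n k r i x₀ w = 0 := fun i => hκc i t ht
    have hηw : ∀ a, η a x₀ w = 0 := fun a => hηc a t ht
    obtain ⟨ζ, hζAdm, hζval⟩ := exists_adm_field hη hcompat I₀ x₀ ut hut1 hηut
    have hζB : ζ ∈ BSpan12 n k r (Adm12 n k r I₀ η) := by
      refine ⟨1, fun _ _ => 1, fun _ => ζ, fun _ => contDiff_const, fun _ => hζAdm, ?_⟩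
      funext x
      simp
    have hvζ := hvar ζ hζB t ht
    rw [extd1_Theta hL] at hvζ
    have hζval' : ζ (γ t) = ((0 : ℝ), ut.2.1, (0 : Fin n → ℝ), ut.2.2.2.1, ut.2.2.2.2) :=
      hζval
    set m0 : E12 n k r :=
      ((0 : ℝ), (0 : Fin n → ℝ), ut.2.2.1, (0 : Fin k → ℝ), (0 : Fin r → ℝ)) with hm0
    have h1 : ut = ζ x₀ + m0 := by
      rw [hζval', hm0]
      refine Prod.ext ?_ (Prod.ext ?_ (Prod.ext ?_ (Prod.ext ?_ ?_))) <;>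
        simp [Prod.fst_add, Prod.snd_add, hut1]
    have hudecomp : u = (ζ x₀ + m0) + ∑ a, c a • R a x₀ := by rw [← h1]; exact hudecomp0
    have hDlin := Dform_linear (L := L) x₀ w
    have hD := lin_comb_eval hDlin c (fun a => R a x₀) u (ζ x₀ + m0) hudecomp
    have hDadd : Dform n k r L x₀ (ζ x₀ + m0) w
        = Dform n k r L x₀ (ζ x₀) w + Dform n k r L x₀ m0 w := hDlin.1 _ _
    have hDm0 : Dform n k r L x₀ m0 w = 0 := Dform_purev x₀ w ut.2.2.1 hκw
    have hDζ : Dform n k r L x₀ (ζ x₀) w = 0 := hvζ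
    rw [hDadd, hDm0, hDζ, zero_add, zero_add] at hD
    rw [hOmgBar]
    simp only [wedge11, iota2]
    rw [extd1_Theta hL]
    have hwedge : ∀ a : Fin k,
        extd1 (ThetaL12 n k r L) x₀ (R a x₀) u * η a x₀ w
          - extd1 (ThetaL12 n k r L) x₀ (R a x₀) w * η a x₀ u
        = -(c a * Dform n k r L x₀ (R a x₀) w) := by
      intro a
      rw [hηw a]
      simp only [extd1_Theta hL]
      have hca : η a x₀ u = c a := by rw [hc]
      rw [hca]
      ring
    rw [Finset.sum_congr rfl fun a _ => hwedge a, hD]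
    rw [← Finset.sum_add_distrib]
    exact Finset.sum_eq_zero fun a _ => by ring
  · rintro ⟨hsec, hI₀c, hηc, hκc, hvar⟩
    refine ⟨hsec, hI₀c, hηc, hκc, ?_⟩
    intro ξ hξB t ht
    obtain ⟨m, g, ζ, hg, hζ, hξeq⟩ := hξB
    set x₀ := γ t with hx₀
    set w := deriv γ t with hw
    have hκw : ∀ i, kap12 n k r i x₀ w = 0 := fun i => hκc i t ht
    have hηw : ∀ a, η a x₀ w = 0 := fun a => hηc a t ht
    have hξVert : ξ ∈ Vert12 n k r := by
      constructor
      · rw [hξeq]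
        exact ContDiff.sum fun j _ => ((hg j).comp contDiff_fst).smul (hζ j).1
      · intro x
        rw [hξeq]
        simp only [Prod.fst_sum]
        refine Finset.sum_eq_zero fun j _ => ?_
        have h1 : (g j x.1 • ζ j x).1 = g j x.1 * (ζ j x).1 := rfl
        rw [h1, (hζ j).2.1 x, mul_zero]
    have hηξ : ∀ a, η a x₀ (ξ x₀) = 0 := by
      intro a
      have hψ : η a x₀ = ⇑(IsLinearMap.mk' (η a x₀) ((hη a).2 x₀)) := rfl
      have hζ0 : ∀ j, η a x₀ (ζ j x₀) = 0 := by
        intro j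
        obtain ⟨mm, f, gg, hf, hgg, heq⟩ := (hζ j).2.2.1 a
        have := congrFun heq x₀
        rw [this]
        exact Finset.sum_eq_zero fun j' _ => by
          rw [hI₀c (gg j') (hgg j') t ht, mul_zero]
      rw [hξeq, hψ, map_sum]
      refine Finset.sum_eq_zero fun j _ => ?_
      rw [_root_.map_smul]
      have : (IsLinearMap.mk' (η a x₀) ((hη a).2 x₀)) (ζ j x₀) = 0 := hζ0 j
      rw [this, smul_zero]
    have hv := hvar ξ hξVert t ht
    rw [hOmgBar] at hv
    rw [← hx₀, ← hw] at hv
    simp only [wedge11, iota2, hηξ, hηw, mul_zero, zero_mul, sub_zero,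
      Finset.sum_const_zero, add_zero] at hv
    exact hv

end VPGeom
end
end

section
/- Let (Ω, (∅, I₁^{nh}), Adm) be a geometric variational problem on π : E = ℝ × N → ℝ with co-oriented nonholonomic constraints I₁^{nh} = ⟨η¹,…,η^k⟩ (η¹,…,η^k, τ pointwise linearly independent). Choose R_α with i_{R_α}τ = 0, i_{R_α}η^β = δ_α^β, and set Ω̄ = Ω + (i_{R_α}Ω) ∧ η^α. Let E' = E × ℝ^k with coordinates p_α, π' : E' → E the projection, Ω' = π'*Ω, η'^α = π'*(η^α), and Ω_U = Ω' + dp_α ∧ η'^α. Then the GVP (Ω_U, ∅, Γ(V(π∘π'))) is an extension of the GVP (Ω̄, (∅, I₁^{nh}), Γ(V(π))): the map γ' ↦ π'∘γ' sends Sol(Ω_U, ∅, Γ(V(π∘π'))) onto Sol(Ω̄, (∅, I₁^{nh}), Γ(V(π))). -/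
open MeasureTheory Set Finset
open scoped ContDiff

noncomputable section

namespace VPGeom

variable {N : Type*} [NormedAddCommGroup N] [NormedSpace ℝ N]

section AuxLemmas

variable {E : Type*} [NormedAddCommGroup E] [NormedSpace ℝ E]
variable {F : Type*} [NormedAddCommGroup F] [NormedSpace ℝ F]

lemma isForm2_zero_left {Ω : E → E → E → ℝ} (hΩ : IsForm2 Ω) (x v : E) : Ω x 0 v = 0 := by
  obtain ⟨m, hm⟩ := hΩ.2 x
  rw [hm]
  exact m.map_coord_zero 0 (by simp)

lemma antideriv_exists [CompleteSpace F] {g : ℝ → F} {I : Set ℝ}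
    (hI : IsOpen I) (hI' : I.OrdConnected) {t₀ : ℝ} (ht₀ : t₀ ∈ I)
    (hg : ContinuousOn g I) :
    ∃ p : ℝ → F, ∀ t ∈ I, HasDerivAt p (g t) t := by
  refine ⟨fun t => ∫ s in t₀..t, g s, fun t ht => ?_⟩
  have hsub : Set.uIcc t₀ t ⊆ I := hI'.uIcc_subset ht₀ ht
  exact intervalIntegral.integral_hasDerivAt_right
    ((hg.mono hsub).intervalIntegrable)
    (hg.stronglyMeasurableAtFilter hI t ht)
    (hg.continuousAt (hI.mem_nhds ht))

lemma deriv_fst_comp {A B : Type*} [NormedAddCommGroup A] [NormedSpace ℝ A]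
    [NormedAddCommGroup B] [NormedSpace ℝ B] {γ' : ℝ → A × B} {t : ℝ}
    (h : HasDerivAt γ' (deriv γ' t) t) :
    deriv (fun s => (γ' s).1) t = (deriv γ' t).1 :=
  ((ContinuousLinearMap.fst ℝ A B).hasFDerivAt.comp_hasDerivAt t h).deriv

lemma one_le_inftyW : (1 : WithTop ℕ∞) ≤ ∞ := by exact_mod_cast le_top

end AuxLemmas

/-- Solution sections on `E = ℝ × N` of a GVP with nonholonomic constraints
`I₁ⁿʰ = ⟨η¹,…,ηᵏ⟩` and vertical variations. -/
def IsSolBase {k : ℕ} (Ω : (ℝ × N) → (ℝ × N) → (ℝ × N) → ℝ)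
    (η : Fin k → (ℝ × N) → (ℝ × N) → ℝ) (γ : ℝ → ℝ × N) (I : Set ℝ) : Prop :=
  IsSection Prod.fst γ I ∧
  (∀ a : Fin k, ∀ t ∈ I, η a (γ t) (deriv γ t) = 0) ∧
  ∀ ξ : (ℝ × N) → ℝ × N, ContDiff ℝ ∞ ξ → (∀ x, (ξ x).1 = 0) →
    ∀ t ∈ I, Ω (γ t) (ξ (γ t)) (deriv γ t) = 0

/-- Solution sections on `E' = E × ℝᵏ` of the unconstrained GVP `(Ω_U, ∅, Γ(V(π∘π')))`. -/
def IsSolUp {k : ℕ} (ΩU : ((ℝ × N) × (Fin k → ℝ)) → ((ℝ × N) × (Fin k → ℝ)) →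
      ((ℝ × N) × (Fin k → ℝ)) → ℝ)
    (γ' : ℝ → (ℝ × N) × (Fin k → ℝ)) (I : Set ℝ) : Prop :=
  IsSection (fun x => x.1.1) γ' I ∧
  ∀ ξ : ((ℝ × N) × (Fin k → ℝ)) → (ℝ × N) × (Fin k → ℝ),
    ContDiff ℝ ∞ ξ → (∀ x, (ξ x).1.1 = 0) →
      ∀ t ∈ I, ΩU (γ' t) (ξ (γ' t)) (deriv γ' t) = 0

/-- With `Ω̄ = Ω + (i_{R_α}Ω) ∧ ηᵅ` on `E` and
`Ω_U = Ω' + dp_α ∧ η'ᵅ` on `E' = E × ℝᵏ`, the GVP `(Ω_U, ∅, Γ(V(π∘π')))` is an extension of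
the GVP `(Ω̄, (∅, I₁ⁿʰ), Γ(V(π)))`: composition with `π'` maps its solutions onto the
solutions of the latter. -/
theorem absorption_nonholonomic {k : ℕ}
    (Ω : (ℝ × N) → (ℝ × N) → (ℝ × N) → ℝ) (hΩ : IsForm2 Ω)
    (η : Fin k → (ℝ × N) → (ℝ × N) → ℝ) (hη : ∀ a, IsForm1 (η a))
    -- co-orientation
    (hcoor : ∀ x : ℝ × N, LinearIndependent ℝ
      (Fin.cons (fun v : ℝ × N => v.1) (fun a => η a x) : Fin (k + 1) → (ℝ × N) → ℝ))
    (R : Fin k → (ℝ × N) → ℝ × N) (hR : ∀ a, ContDiff ℝ ∞ (R a))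
    (hRτ : ∀ a x, (R a x).1 = 0)
    (hRη : ∀ a b x, η b x (R a x) = if a = b then 1 else 0)
    (OmgBar : (ℝ × N) → (ℝ × N) → (ℝ × N) → ℝ)
    (hOmgBar : ∀ x u v, OmgBar x u v =
      Ω x u v + ∑ a, wedge11 (iota2 (R a) Ω) (η a) x u v)
    (OmgU : ((ℝ × N) × (Fin k → ℝ)) → ((ℝ × N) × (Fin k → ℝ)) →
      ((ℝ × N) × (Fin k → ℝ)) → ℝ)
    (hOmgU : ∀ x u v, OmgU x u v =
      Ω x.1 u.1 v.1 + ∑ a, (u.2 a * η a x.1 v.1 - v.2 a * η a x.1 u.1)) :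
    (∀ (γ' : ℝ → (ℝ × N) × (Fin k → ℝ)) (I : Set ℝ), IsSolUp OmgU γ' I →
        IsSolBase OmgBar η (fun t => (γ' t).1) I) ∧
    (∀ (γ : ℝ → ℝ × N) (I : Set ℝ), IsSolBase OmgBar η γ I →
        ∃ γ' : ℝ → (ℝ × N) × (Fin k → ℝ), IsSolUp OmgU γ' I ∧ ∀ t ∈ I, (γ' t).1 = γ t) := by
  constructor
  · -- Part 1: projection of an upstairs solution is a downstairs solution.
    rintro γ' I ⟨hsec, hvar⟩
    set γ : ℝ → ℝ × N := fun t => (γ' t).1 with hγdef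
    have hdiff : ∀ t ∈ I, HasDerivAt γ' (deriv γ' t) t := fun t ht =>
      (((hsec.smooth.contDiffAt (hsec.isOpen.mem_nhds ht)).differentiableAt
        (by simp))).hasDerivAt
    have hdfst : ∀ t ∈ I, deriv γ t = (deriv γ' t).1 := fun t ht =>
      deriv_fst_comp (hdiff t ht)
    -- the constraint equations hold downstairs
    have hcon : ∀ a : Fin k, ∀ t ∈ I, η a (γ t) (deriv γ t) = 0 := by
      intro a t ht
      have hv := hvar (fun _ => ((0 : ℝ × N), (Pi.single a 1 : Fin k → ℝ)))
        contDiff_const (fun x => by simp) t ht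
      rw [hOmgU] at hv
      have hz : Ω (γ' t).1 ((0 : ℝ × N)) (deriv γ' t).1 = 0 :=
        isForm2_zero_left hΩ _ _
      have hηz : ∀ b : Fin k, η b (γ' t).1 (0 : ℝ × N) = 0 := fun b =>
        ((hη b).2 _).map_zero
      have hsum : ∀ b : Fin k,
          ((Pi.single a (1:ℝ) : Fin k → ℝ) b * η b (γ' t).1 (deriv γ' t).1
            - (deriv γ' t).2 b * η b (γ' t).1 (0 : ℝ × N))
          = if a = b then η b (γ' t).1 (deriv γ' t).1 else 0 := by
        intro b
        rw [hηz b, Pi.single_apply]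
        by_cases h : a = b
        · simp [h]
        · simp [h, Ne.symm h]
      simp only [hsum, hz, zero_add, Finset.sum_ite_eq, Finset.mem_univ, if_true] at hv
      rw [hdfst t ht]
      exact hv
    refine ⟨⟨hsec.isOpen, hsec.ordConnected, hsec.nonempty,
      contDiff_fst.comp_contDiffOn hsec.smooth, hsec.proj⟩, hcon, ?_⟩
    -- the variational equations hold downstairs
    intro ξ hξ hξv t ht
    set x : ℝ × N := (γ' t).1 with hxdef
    set v : (ℝ × N) × (Fin k → ℝ) := deriv γ' t with hvdef
    have hη0 : ∀ a : Fin k, η a x v.1 = 0 := by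
      intro a
      have := hcon a t ht
      rwa [hdfst t ht] at this
    -- upstairs equation for the lift of ξ
    have h2 := hvar (fun y => ((ξ y.1, (0 : Fin k → ℝ))))
      ((hξ.comp contDiff_fst).prodMk contDiff_const) (fun y => hξv y.1) t ht
    rw [hOmgU] at h2
    rw [← hvdef, ← hxdef] at h2
    simp only [hη0, mul_zero, zero_sub, Finset.sum_neg_distrib] at h2
    -- upstairs equation for the lifts of the R a
    have h3 : ∀ a : Fin k, Ω x (R a x) v.1 = v.2 a := by
      intro a
      have h3' := hvar (fun y => ((R a y.1, (0 : Fin k → ℝ))))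
        (((hR a).comp contDiff_fst).prodMk contDiff_const) (fun y => hRτ a y.1) t ht
      rw [hOmgU] at h3'
      rw [← hvdef, ← hxdef] at h3'
      have hsum : ∀ b : Fin k,
          ((0 : Fin k → ℝ) b * η b x v.1 - v.2 b * η b x (R a x))
          = -(if a = b then v.2 b else 0) := by
        intro b
        rw [hRη a b x]
        by_cases h : a = b <;> simp [h]
      simp only [hsum, Finset.sum_neg_distrib, Finset.sum_ite_eq, Finset.mem_univ,
        if_true] at h3'
      linarith
    rw [hOmgBar, hdfst t ht]
    simp only [wedge11, iota2]
    have hsum2 : ∀ a : Fin k,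
        (Ω x (R a x) (ξ (γ t)) * η a x v.1 - Ω x (R a x) v.1 * η a x (ξ (γ t)))
        = -(v.2 a * η a x (ξ (γ t))) := by
      intro a
      rw [hη0 a, h3 a]
      ring
    have hγt : γ t = x := rfl
    rw [hγt]
    calc Ω x (ξ x) v.1 + ∑ a, (Ω x (R a x) (ξ x) * η a x v.1
            - Ω x (R a x) v.1 * η a x (ξ x))
        = Ω x (ξ x) v.1 - ∑ a, v.2 a * η a x (ξ x) := by
          rw [show (∑ a, (Ω x (R a x) (ξ x) * η a x v.1
            - Ω x (R a x) v.1 * η a x (ξ x)))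
            = ∑ a, -(v.2 a * η a x (ξ x)) from Finset.sum_congr rfl fun a _ => hsum2 a]
          rw [Finset.sum_neg_distrib]; ring
      _ = 0 := by linarith
  · -- Part 2: every downstairs solution lifts to an upstairs solution.
    rintro γ I ⟨hsec, hcon, hvar⟩
    have hγdiff : ∀ t ∈ I, HasDerivAt γ (deriv γ t) t := fun t ht =>
      (((hsec.smooth.contDiffAt (hsec.isOpen.mem_nhds ht)).differentiableAt
        (by simp))).hasDerivAt
    have hdsm : ContDiffOn ℝ ∞ (deriv γ) I :=
      hsec.smooth.deriv_of_isOpen hsec.isOpen (by simp)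
    set g : ℝ → (Fin k → ℝ) := fun t a => Ω (γ t) (R a (γ t)) (deriv γ t) with hgdef
    have hgsm : ContDiffOn ℝ ∞ g I := by
      rw [contDiffOn_pi]
      intro a
      exact hΩ.1.comp_contDiffOn
        (hsec.smooth.prodMk ((((hR a).comp_contDiffOn hsec.smooth)).prodMk hdsm))
    obtain ⟨t₀, ht₀⟩ := hsec.nonempty
    obtain ⟨p, hp⟩ := antideriv_exists hsec.isOpen hsec.ordConnected ht₀
      hgsm.continuousOn
    have hpsm : ContDiffOn ℝ ∞ p I := by
      rw [contDiffOn_infty_iff_deriv_of_isOpen hsec.isOpen]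
      exact ⟨fun t ht => ((hp t ht).differentiableAt).differentiableWithinAt,
        hgsm.congr fun t ht => (hp t ht).deriv⟩
    refine ⟨fun t => (γ t, p t), ⟨⟨hsec.isOpen, hsec.ordConnected, hsec.nonempty,
      hsec.smooth.prodMk hpsm, fun t ht => hsec.proj t ht⟩, ?_⟩, fun t ht => rfl⟩
    intro ξ' hξ' hξ'v t ht
    set γ' : ℝ → (ℝ × N) × (Fin k → ℝ) := fun t => (γ t, p t) with hγ'def
    have hderiv' : deriv γ' t = (deriv γ t, g t) :=
      ((hγdiff t ht).prodMk (hp t ht)).deriv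
    rw [hOmgU, hderiv']
    set u : (ℝ × N) × (Fin k → ℝ) := ξ' (γ' t) with hudef
    -- downstairs variational equation with a frozen fibre coordinate
    have hd := hvar (fun y => (ξ' (y, p t)).1)
      (contDiff_fst.comp (hξ'.comp (contDiff_id.prodMk contDiff_const)))
      (fun y => hξ'v (y, p t)) t ht
    rw [hOmgBar] at hd
    simp only [wedge11, iota2] at hd
    have hη0 : ∀ a : Fin k, η a (γ t) (deriv γ t) = 0 := fun a => hcon a t ht
    have hu1 : (ξ' ((γ t), p t)).1 = u.1 := rfl
    simp only [hη0, mul_zero, zero_sub, hu1] at hd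
    have hsum : ∀ a : Fin k,
        (u.2 a * η a (γ t) (deriv γ t) - g t a * η a (γ t) u.1)
        = -(Ω (γ t) (R a (γ t)) (deriv γ t) * η a (γ t) u.1) := by
      intro a
      rw [hη0 a]
      simp [hgdef]
    calc Ω (γ' t).1 u.1 (deriv γ t)
          + ∑ a, (u.2 a * η a (γ' t).1 (deriv γ t) - g t a * η a (γ' t).1 u.1)
        = Ω (γ t) u.1 (deriv γ t)
          + ∑ a, -(Ω (γ t) (R a (γ t)) (deriv γ t) * η a (γ t) u.1) :=
          congrArg _ (Finset.sum_congr rfl fun a _ => hsum a)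
      _ = 0 := by
          rw [Finset.sum_neg_distrib] at hd ⊢
          linarith [hd]

end VPGeom
end
end
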